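/- arXiv:2212.06022 — 4 statements merged into one kernel-verified Lean document; each statement's English description precedes it below -/
import Mathlib

section
/- Let the grading by q be good for the ad-nilpotent element f ∈ 𝔤, let 𝔪 be a good algebra for (f,q) and χ := B(f,·). Then: (i) 𝔪 is a Lie subalgebra of 𝔤 and every z ∈ 𝔪 is ad-nilpotent; (ii) χ restricts to a character of 𝔪, i.e. χ(⁅x,y⁆) = 0 for all x,y ∈ 𝔪; (iii) 2·dim 𝔪 = dim 𝔤 − dim ker(ad f). -/
open LieAlgebra Module

noncomputable section

variable {L : Type*} [LieRing L] [LieAlgebra ℂ L]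

/-- The `j`-eigenspace of `ad q` on the Lie algebra. -/
def gSp (q : L) (j : ℤ) : Submodule ℂ L where
  carrier := {x | ⁅q, x⁆ = (j : ℂ) • x}
  add_mem' {a b} ha hb := by
    simp only [Set.mem_setOf_eq] at *
    rw [lie_add, ha, hb, smul_add]
  zero_mem' := by simp
  smul_mem' c x hx := by
    simp only [Set.mem_setOf_eq] at *
    rw [lie_smul, hx, smul_comm]

/-- The grading by `q` (whose adjoint action is diagonalizable with integer eigenvalues)
is good for `f`. -/
structure IsGoodGrading (q f : L) : Prop where
  decomp : (⨆ j : ℤ, gSp q j) = ⊤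
  f_mem : f ∈ gSp q (-2)
  inj : ∀ j : ℤ, 1 ≤ j → ∀ x ∈ gSp q j, ⁅f, x⁆ = 0 → x = 0
  surj : ∀ j : ℤ, j ≤ 1 → ∀ y ∈ gSp q (j - 2), ∃ x ∈ gSp q j, ⁅f, x⁆ = y

/-- `m` is a good algebra for `(f, q)`: `m = l ⊕ ⨁_{j ≥ 2} 𝔤_j(q)` for a Lagrangian
subspace `l` of `𝔤₁(q)` with respect to the symplectic form `(x, y) ↦ B f ⁅x, y⁆`. -/
def IsGoodAlgebra (B : LinearMap.BilinForm ℂ L) (q f : L) (m : Submodule ℂ L) : Prop :=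
  ∃ l : Submodule ℂ L, l ≤ gSp q 1 ∧
    (∀ x ∈ l, ∀ y ∈ l, B f ⁅x, y⁆ = 0) ∧
    (∀ x ∈ gSp q 1, (∀ y ∈ l, B f ⁅x, y⁆ = 0) → x ∈ l) ∧
    m = l ⊔ ⨆ j : ℤ, ⨆ _ : 2 ≤ j, gSp q j

set_option linter.unusedSectionVars false
set_option linter.unusedVariables false
set_option maxHeartbeats 1000000

lemma mem_gSp {q x : L} {j : ℤ} : x ∈ gSp q j ↔ ⁅q, x⁆ = (j : ℂ) • x := Iff.rfl

lemma gSp_eq_eigenspace (q : L) (j : ℤ) :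
    gSp q j = Module.End.eigenspace (ad ℂ L q) (j : ℂ) := by
  ext x
  rw [mem_gSp, Module.End.mem_eigenspace_iff, ad_apply]

lemma gSp_indep (q : L) : iSupIndep (gSp q) := by
  have h := (Module.End.eigenspaces_iSupIndep (ad ℂ L q)).comp
    (Int.cast_injective (α := ℂ))
  have : gSp q = (Module.End.eigenspace (ad ℂ L q) ∘ fun j : ℤ => (j : ℂ)) := by
    funext j; exact gSp_eq_eigenspace q j
  rw [this]; exact h

lemma lie_mem_gSp {q x y : L} {i j : ℤ} (hx : x ∈ gSp q i) (hy : y ∈ gSp q j) :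
    ⁅x, y⁆ ∈ gSp q (i + j) := by
  rw [mem_gSp] at *
  rw [leibniz_lie, hx, hy, lie_smul, smul_lie]
  push_cast
  rw [add_smul]

section helpers
variable {ι : Type*} [DecidableEq ι] {M : Type*} [AddCommGroup M] [Module ℂ M]

lemma finrank_iSup_finset [FiniteDimensional ℂ M]
    {g : ι → Submodule ℂ M} (hg : iSupIndep g) (s : Finset ι) :
    finrank ℂ ↥(⨆ j ∈ s, g j) = ∑ j ∈ s, finrank ℂ ↥(g j) := by
  induction s using Finset.induction_on with
  | empty => simp
  | @insert a s ha ih =>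
    rw [Finset.iSup_insert, Finset.sum_insert ha, ← ih]
    have hdisj : Disjoint (g a) (⨆ j ∈ s, g j) := by
      refine (hg a).mono_right ?_
      exact iSup₂_le fun j hj => le_iSup₂ (f := fun j (_ : j ≠ a) => g j) j
        (fun h => ha (h ▸ hj))
    have h1 := Submodule.finrank_sup_add_finrank_inf_eq (g a) (⨆ j ∈ s, g j)
    rw [hdisj.eq_bot] at h1
    simp only [finrank_bot, add_zero] at h1
    exact h1

lemma comp_eq_zero_of_sum_eq_zero
    {g : ι → Submodule ℂ M} (hg : iSupIndep g) (s : Finset ι) (y : ι → M)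
    (hy : ∀ j ∈ s, y j ∈ g j) (hsum : ∑ j ∈ s, y j = 0) :
    ∀ j ∈ s, y j = 0 := by
  induction s using Finset.induction_on with
  | empty => simp
  | @insert a s ha ih =>
    rw [Finset.sum_insert ha] at hsum
    have hya : y a = 0 := by
      have h1 : y a ∈ g a := hy a (Finset.mem_insert_self a s)
      have h2 : y a ∈ ⨆ j ≠ a, g j := by
        have hrep : y a = -∑ j ∈ s, y j := eq_neg_of_add_eq_zero_left hsum
        rw [hrep]
        refine neg_mem (Submodule.sum_mem _ fun j hj => ?_)
        exact le_iSup₂ (f := fun j (_ : j ≠ a) => g j) j (fun h => ha (h ▸ hj))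
          (hy j (Finset.mem_insert_of_mem hj))
      exact Submodule.disjoint_def.mp (hg a) _ h1 h2
    rw [hya, zero_add] at hsum
    intro j hj
    rcases Finset.mem_insert.mp hj with rfl | hj
    · exact hya
    · exact ih (fun k hk => hy k (Finset.mem_insert_of_mem hk)) hsum j hj
end helpers

section main
variable [FiniteDimensional ℂ L] {q f : L}

lemma gSp_support_finite (q : L) : {j : ℤ | gSp q j ≠ ⊥}.Finite := by
  have h := Module.End.finite_hasEigenvalue (ad ℂ L q)
  refine Set.Finite.of_finite_image (f := fun j : ℤ => (j : ℂ)) (h.subset ?_)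
    Int.cast_injective.injOn
  rintro μ ⟨j, hj, rfl⟩
  rw [Set.mem_setOf_eq, gSp_eq_eigenspace] at hj
  exact hj

lemma exists_gSp_bound (q : L) :
    ∃ N : ℕ, 1 ≤ N ∧ ∀ j : ℤ, (N : ℤ) < |j| → gSp q j = ⊥ := by
  obtain ⟨t, ht⟩ := Set.Finite.exists_finset_coe (gSp_support_finite q)
  refine ⟨t.sup (fun j => j.natAbs) + 1, le_add_self, fun j hj => ?_⟩
  by_contra hne
  have hmem : j ∈ t := by rw [← Finset.mem_coe, ht]; exact hne
  have : j.natAbs ≤ t.sup (fun j => j.natAbs) := Finset.le_sup hmem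
  rw [Int.abs_eq_natAbs] at hj
  omega

/-- `F t` is the sum of graded pieces of degree at least `t`. -/
def F (q : L) (t : ℤ) : Submodule ℂ L := ⨆ j : ℤ, ⨆ _ : t ≤ j, gSp q j

lemma gSp_le_F {t j : ℤ} (h : t ≤ j) : gSp q j ≤ F q t :=
  le_iSup₂ (f := fun j (_ : t ≤ j) => gSp q j) j h

lemma F_antitone {s t : ℤ} (h : s ≤ t) : F q t ≤ F q s :=
  iSup₂_le fun j hj => gSp_le_F (h.trans hj)

lemma lie_F {s t : ℤ} {x y : L} (hx : x ∈ F q s) (hy : y ∈ F q t) :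
    ⁅x, y⁆ ∈ F q (s + t) := by
  induction hx using Submodule.iSup_induction' with
  | mem i x hx =>
    induction hx using Submodule.iSup_induction' with
    | mem hi x hx =>
      induction hy using Submodule.iSup_induction' with
      | mem j y hy =>
        induction hy using Submodule.iSup_induction' with
        | mem hj y hy => exact gSp_le_F (add_le_add hi hj) (lie_mem_gSp hx hy)
        | zero => simp
        | add y z _ _ hy hz => rw [lie_add]; exact add_mem hy hz
      | zero => simp
      | add y z _ _ hy hz => rw [lie_add]; exact add_mem hy hz
    | zero => simp
    | add a b _ _ ha hb => rw [add_lie]; exact add_mem ha hb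
  | zero => simp
  | add a b _ _ ha hb => rw [add_lie]; exact add_mem ha hb
end main

section main2
variable [FiniteDimensional ℂ L] {q f : L}

lemma F_eq_bot {N : ℕ} (hN : ∀ j : ℤ, (N : ℤ) < |j| → gSp q j = ⊥) {t : ℤ}
    (ht : (N : ℤ) < t) : F q t = ⊥ := by
  refine le_bot_iff.mp (iSup₂_le fun j hj => ?_)
  rw [hN j (by rw [abs_of_nonneg (by omega)]; omega)]

lemma top_le_F (hgood : IsGoodGrading q f) {N : ℕ}
    (hN : ∀ j : ℤ, (N : ℤ) < |j| → gSp q j = ⊥) :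
    (⊤ : Submodule ℂ L) ≤ F q (-(N : ℤ)) := by
  rw [← hgood.decomp]
  refine iSup_le fun j => ?_
  by_cases hj : -(N : ℤ) ≤ j
  · exact gSp_le_F hj
  · rw [hN j (by rw [abs_of_nonpos (by omega)]; omega)]; exact bot_le

lemma F_eq_iSup_Icc {N : ℕ} (hN : ∀ j : ℤ, (N : ℤ) < |j| → gSp q j = ⊥) (t : ℤ) :
    F q t = ⨆ j ∈ Finset.Icc t (N : ℤ), gSp q j := by
  apply le_antisymm
  · refine iSup₂_le fun j hj => ?_
    by_cases hj' : j ≤ (N : ℤ)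
    · exact le_iSup₂ (f := fun j (_ : j ∈ Finset.Icc t (N : ℤ)) => gSp q j) j
        (Finset.mem_Icc.mpr ⟨hj, hj'⟩)
    · rw [hN j (by rw [abs_of_nonneg] <;> omega)]; exact bot_le
  · refine iSup₂_le fun j hj => gSp_le_F (Finset.mem_Icc.mp hj).1

/-- Orthogonality of graded pieces. -/
lemma B_apply_eq_zero (B : LinearMap.BilinForm ℂ L)
    (hBinv : ∀ x y z : L, B ⁅x, y⁆ z = B x ⁅y, z⁆)
    {i j : ℤ} (hij : i + j ≠ 0) {x y : L} (hx : x ∈ gSp q i) (hy : y ∈ gSp q j) :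
    B x y = 0 := by
  rw [mem_gSp] at hx hy
  have h2 : B ⁅x, q⁆ y = B x ⁅q, y⁆ := hBinv x q y
  have hxq : ⁅x, q⁆ = -((i : ℂ) • x) := by rw [← lie_skew, hx]
  rw [hxq, hy] at h2
  simp only [map_neg, map_smul, LinearMap.neg_apply, LinearMap.smul_apply,
    smul_eq_mul] at h2
  have hij' : ((i : ℂ) + j) ≠ 0 := by exact_mod_cast hij
  have h5 : ((i : ℂ) + j) * B x y = 0 := by linear_combination -h2
  rcases mul_eq_zero.mp h5 with h | h
  · exact absurd h hij'
  · exact h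

/-- `B f` vanishes on graded pieces of degree different from `2`. -/
lemma B_f_eq_zero (B : LinearMap.BilinForm ℂ L)
    (hBinv : ∀ x y z : L, B ⁅x, y⁆ z = B x ⁅y, z⁆)
    (hgood : IsGoodGrading q f) {j : ℤ} (hj : j ≠ 2) {x : L} (hx : x ∈ gSp q j) :
    B f x = 0 :=
  B_apply_eq_zero B hBinv (by omega) hgood.f_mem hx

lemma B_f_eq_zero_F (B : LinearMap.BilinForm ℂ L)
    (hBinv : ∀ x y z : L, B ⁅x, y⁆ z = B x ⁅y, z⁆)
    (hgood : IsGoodGrading q f) {x : L} (hx : x ∈ F q 3) :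
    B f x = 0 := by
  induction hx using Submodule.iSup_induction' with
  | mem j x hx =>
    induction hx using Submodule.iSup_induction' with
    | mem hj x hx => exact B_f_eq_zero B hBinv hgood (by omega) hx
    | zero => simp
    | add x y _ _ hx hy => rw [map_add, hx, hy, add_zero]
  | zero => simp
  | add x y _ _ hx hy => rw [map_add, hx, hy, add_zero]

end main2

section main3
variable [FiniteDimensional ℂ L] {q f : L}

lemma eq_zero_of_B (B : LinearMap.BilinForm ℂ L)
    (hBnondeg : ∀ x : L, (∀ y : L, B x y = 0) → x = 0)
    (hgood : IsGoodGrading q f) {x : L}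
    (hx : ∀ j : ℤ, ∀ y ∈ gSp q j, B x y = 0) : x = 0 := by
  refine hBnondeg x fun y => ?_
  have hy : y ∈ ⨆ j : ℤ, gSp q j := by rw [hgood.decomp]; trivial
  induction hy using Submodule.iSup_induction' with
  | mem j y hy => exact hx j y hy
  | zero => simp
  | add y z _ _ hy hz => rw [map_add, hy, hz, add_zero]

lemma finrank_gSp_symm (B : LinearMap.BilinForm ℂ L)
    (hBnondeg : ∀ x : L, (∀ y : L, B x y = 0) → x = 0)
    (hBinv : ∀ x y z : L, B ⁅x, y⁆ z = B x ⁅y, z⁆)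
    (hgood : IsGoodGrading q f) (j : ℤ) :
    finrank ℂ (gSp q j) = finrank ℂ (gSp q (-j)) := by
  have key : ∀ i : ℤ, finrank ℂ (gSp q i) ≤ finrank ℂ (gSp q (-i)) := by
    intro i
    set φ : gSp q i →ₗ[ℂ] Module.Dual ℂ (gSp q (-i)) :=
      B.domRestrict₁₂ (gSp q i) (gSp q (-i)) with hφ
    have hinj : Function.Injective φ := by
      rw [← LinearMap.ker_eq_bot, Submodule.eq_bot_iff]
      rintro ⟨x, hx⟩ hker
      refine Subtype.ext (eq_zero_of_B B hBnondeg hgood fun k y hy => ?_)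
      by_cases hk : k = -i
      · subst hk
        have h0 : φ ⟨x, hx⟩ = 0 := LinearMap.mem_ker.mp hker
        have h1 := congrArg (fun g => g ⟨y, hy⟩) h0
        simpa [hφ, LinearMap.domRestrict₁₂_apply] using h1
      · exact B_apply_eq_zero B hBinv (by omega) hx hy
    calc finrank ℂ (gSp q i) ≤ finrank ℂ (Module.Dual ℂ (gSp q (-i))) :=
          LinearMap.finrank_le_finrank_of_injective hinj
      _ = finrank ℂ (gSp q (-i)) := Subspace.dual_finrank_eq
  refine le_antisymm (key j) ?_
  have := key (-j)
  rwa [neg_neg] at this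

lemma ad_f_maps (hgood : IsGoodGrading q f) (j : ℤ) :
    ∀ x ∈ gSp q j, (ad ℂ L f) x ∈ gSp q (j - 2) := fun x hx => by
  rw [ad_apply, sub_eq_neg_add]
  exact lie_mem_gSp hgood.f_mem hx

lemma finrank_ker_inf (hgood : IsGoodGrading q f) {j : ℤ} (hj : j ≤ 1) :
    finrank ℂ (gSp q j) =
      finrank ℂ ↥(LinearMap.ker (ad ℂ L f) ⊓ gSp q j) + finrank ℂ (gSp q (j - 2)) := by
  set ψ : gSp q j →ₗ[ℂ] gSp q (j - 2) := (ad ℂ L f).restrict (ad_f_maps hgood j) with hψ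
  have hr := LinearMap.finrank_range_add_finrank_ker ψ
  have hrange : LinearMap.range ψ = ⊤ := by
    rw [LinearMap.range_eq_top]
    rintro ⟨y, hy⟩
    obtain ⟨x, hx, hfx⟩ := hgood.surj j hj y hy
    exact ⟨⟨x, hx⟩, Subtype.ext (by simpa [hψ, LinearMap.restrict_apply, ad_apply] using hfx)⟩
  have hker : finrank ℂ ↥(LinearMap.ker ψ) =
      finrank ℂ ↥(LinearMap.ker (ad ℂ L f) ⊓ gSp q j) := by
    have heq : Submodule.map (gSp q j).subtype (LinearMap.ker ψ) =
        LinearMap.ker (ad ℂ L f) ⊓ gSp q j := by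
      ext x
      simp only [Submodule.mem_map, LinearMap.mem_ker, Submodule.mem_inf,
        Submodule.subtype_apply]
      constructor
      · rintro ⟨⟨x, hx⟩, hk, rfl⟩
        have : (ad ℂ L f) x = 0 := by
          simpa [hψ, LinearMap.restrict_apply, Subtype.ext_iff] using hk
        exact ⟨this, hx⟩
      · rintro ⟨hk, hx⟩
        exact ⟨⟨x, hx⟩, Subtype.ext (by simpa [hψ, LinearMap.restrict_apply] using hk), rfl⟩
    rw [← heq]
    exact (Submodule.equivSubtypeMap (gSp q j) (LinearMap.ker ψ)).finrank_eq
  rw [hrange] at hr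
  rw [finrank_top] at hr
  omega

end main3

section main4
variable [FiniteDimensional ℂ L] {q f : L}

lemma iSup_eq_sup_finset {ι : Type*} {M : Type*} [AddCommGroup M] [Module ℂ M]
    {h : ι → Submodule ℂ M} (s : Finset ι) (hb : ∀ j ∉ s, h j = ⊥) :
    ⨆ j, h j = ⨆ j ∈ s, h j := by
  apply le_antisymm
  · refine iSup_le fun j => ?_
    by_cases hj : j ∈ s
    · exact le_iSup₂ (f := fun j (_ : j ∈ s) => h j) j hj
    · rw [hb j hj]; exact bot_le
  · exact iSup₂_le fun j _ => le_iSup h j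

lemma ker_ad_f_eq (hgood : IsGoodGrading q f) :
    LinearMap.ker (ad ℂ L f) = ⨆ j : ℤ, (LinearMap.ker (ad ℂ L f) ⊓ gSp q j) := by
  apply le_antisymm
  · intro x hx
    have hxtop : x ∈ ⨆ j : ℤ, gSp q j := by rw [hgood.decomp]; trivial
    obtain ⟨c, hc, hsum⟩ := (Submodule.mem_iSup_iff_exists_finsupp _ _).mp hxtop
    have hfx : ⁅f, x⁆ = 0 := by
      have := LinearMap.mem_ker.mp hx
      rwa [ad_apply] at this
    have hxs : ∑ j ∈ c.support, c j = x := by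
      rw [← hsum]; simp [Finsupp.sum]
    have hzero : ∑ j ∈ c.support, ⁅f, c j⁆ = 0 := by
      have hms := map_sum (ad ℂ L f) (fun j => c j) c.support
      simp only [ad_apply] at hms
      rw [← hms, hxs, hfx]
    have hcomp : ∀ j ∈ c.support, ⁅f, c j⁆ = 0 := by
      have hindep : iSupIndep (fun j : ℤ => gSp q (j - 2)) := by
        exact (gSp_indep q).comp (f := fun j : ℤ => j - 2) sub_left_injective
      exact comp_eq_zero_of_sum_eq_zero hindep c.support (fun j => ⁅f, c j⁆)
        (fun j _ => by
          rw [sub_eq_neg_add]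
          exact lie_mem_gSp hgood.f_mem (hc j)) hzero
    rw [← hxs]
    refine Submodule.sum_mem _ fun j hj => ?_
    refine Submodule.mem_iSup_of_mem j (Submodule.mem_inf.mpr ⟨?_, hc j⟩)
    rw [LinearMap.mem_ker, ad_apply]
    exact hcomp j hj
  · exact iSup_le fun j => inf_le_left

lemma ker_inf_pos (hgood : IsGoodGrading q f) {j : ℤ} (hj : 1 ≤ j) :
    LinearMap.ker (ad ℂ L f) ⊓ gSp q j = ⊥ := by
  rw [Submodule.eq_bot_iff]
  rintro x ⟨hk, hx⟩
  refine hgood.inj j hj x hx ?_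
  have := LinearMap.mem_ker.mp hk
  rwa [ad_apply] at this

lemma sum_range_two_mul (a : ℕ → ℕ) (n : ℕ) :
    ∑ k ∈ Finset.range (2 * n), a k =
      ∑ k ∈ Finset.range n, a (2 * k) + ∑ k ∈ Finset.range n, a (2 * k + 1) := by
  induction n with
  | zero => simp
  | succ n ih =>
    rw [show 2 * (n + 1) = 2 * n + 1 + 1 by ring, Finset.sum_range_succ, Finset.sum_range_succ,
      Finset.sum_range_succ, Finset.sum_range_succ, ih]
    ring_nf

lemma d_tele (hgood : IsGoodGrading q f) {v : ℤ} (hv : v ≤ 1) (n : ℕ) :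
    finrank ℂ (gSp q v) =
      (∑ k ∈ Finset.range n,
        finrank ℂ ↥(LinearMap.ker (ad ℂ L f) ⊓ gSp q (v - 2 * (k : ℤ)))) +
        finrank ℂ (gSp q (v - 2 * (n : ℤ))) := by
  induction n with
  | zero =>
    rw [show v - 2 * ((0 : ℕ) : ℤ) = v by push_cast; ring]
    simp
  | succ n ih =>
    rw [ih, Finset.sum_range_succ]
    have h1 := finrank_ker_inf hgood (j := v - 2 * (n : ℤ)) (by omega)
    have h2 : v - 2 * (n : ℤ) - 2 = v - 2 * ((n : ℕ) + 1 : ℤ) := by ring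
    rw [h2] at h1
    push_cast at h1 ⊢
    omega

end main4

section main5
variable [FiniteDimensional ℂ L] {q f : L}

lemma finrank_ker_ad_f (hgood : IsGoodGrading q f) {N : ℕ}
    (hN : ∀ j : ℤ, (N : ℤ) < |j| → gSp q j = ⊥) :
    finrank ℂ ↥(LinearMap.ker (ad ℂ L f)) =
      finrank ℂ (gSp q 0) + finrank ℂ (gSp q (-1)) := by
  classical
  set T : Finset ℤ := (Finset.range (2 * (N + 1))).image (fun k : ℕ => -(k : ℤ)) with hT
  have hbot : ∀ j ∉ T, LinearMap.ker (ad ℂ L f) ⊓ gSp q j = ⊥ := by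
    intro j hj
    by_cases h1 : 1 ≤ j
    · exact ker_inf_pos hgood h1
    · have hj' : j < -(2 * (N : ℤ) + 1) := by
        by_contra hcon
        push_neg at hcon
        apply hj
        rw [hT]
        exact Finset.mem_image.mpr ⟨(-j).toNat, Finset.mem_range.mpr (by omega), by omega⟩
      rw [hN j (by rw [abs_of_nonpos (by omega)]; omega), inf_bot_eq]
  have hKsup : LinearMap.ker (ad ℂ L f) =
      ⨆ j ∈ T, LinearMap.ker (ad ℂ L f) ⊓ gSp q j := by
    conv_lhs => rw [ker_ad_f_eq hgood]
    exact iSup_eq_sup_finset T hbot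
  have hindep : iSupIndep (fun j : ℤ => LinearMap.ker (ad ℂ L f) ⊓ gSp q j) :=
    iSupIndep.mono (gSp_indep q) fun j => inf_le_right
  have hfr : finrank ℂ ↥(LinearMap.ker (ad ℂ L f)) =
      ∑ j ∈ T, finrank ℂ ↥(LinearMap.ker (ad ℂ L f) ⊓ gSp q j) := by
    conv_lhs => rw [hKsup]
    exact finrank_iSup_finset hindep T
  have hsum : ∑ j ∈ T, finrank ℂ ↥(LinearMap.ker (ad ℂ L f) ⊓ gSp q j) =
      ∑ k ∈ Finset.range (2 * (N + 1)),
        finrank ℂ ↥(LinearMap.ker (ad ℂ L f) ⊓ gSp q (-(k : ℤ))) := by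
    rw [hT]
    exact Finset.sum_image (fun a _ b _ hab => by omega)
  have heven := d_tele (f := f) hgood (v := 0) (by norm_num) (N + 1)
  have hodd := d_tele (f := f) hgood (v := -1) (by norm_num) (N + 1)
  have htail0 : finrank ℂ (gSp q ((0 : ℤ) - 2 * ((N + 1 : ℕ) : ℤ))) = 0 := by
    rw [hN _ (by rw [abs_of_nonpos (by push_cast; omega)]; push_cast; omega)]
    exact finrank_bot ℂ L
  have htail1 : finrank ℂ (gSp q ((-1 : ℤ) - 2 * ((N + 1 : ℕ) : ℤ))) = 0 := by
    rw [hN _ (by rw [abs_of_nonpos (by push_cast; omega)]; push_cast; omega)]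
    exact finrank_bot ℂ L
  rw [htail0, add_zero] at heven
  rw [htail1, add_zero] at hodd
  have hsplit := sum_range_two_mul
    (fun k => finrank ℂ ↥(LinearMap.ker (ad ℂ L f) ⊓ gSp q (-(k : ℤ)))) (N + 1)
  have he : ∀ k ∈ Finset.range (N + 1),
      finrank ℂ ↥(LinearMap.ker (ad ℂ L f) ⊓ gSp q (-((2 * k : ℕ) : ℤ))) =
      finrank ℂ ↥(LinearMap.ker (ad ℂ L f) ⊓ gSp q ((0 : ℤ) - 2 * (k : ℤ))) := by
    intro k _
    have hc : (-((2 * k : ℕ) : ℤ)) = (0 : ℤ) - 2 * (k : ℤ) := by push_cast; ring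
    rw [hc]
  have ho : ∀ k ∈ Finset.range (N + 1),
      finrank ℂ ↥(LinearMap.ker (ad ℂ L f) ⊓ gSp q (-((2 * k + 1 : ℕ) : ℤ))) =
      finrank ℂ ↥(LinearMap.ker (ad ℂ L f) ⊓ gSp q ((-1 : ℤ) - 2 * (k : ℤ))) := by
    intro k _
    have hc : (-((2 * k + 1 : ℕ) : ℤ)) = (-1 : ℤ) - 2 * (k : ℤ) := by push_cast; ring
    rw [hc]
  rw [Finset.sum_congr rfl he, Finset.sum_congr rfl ho] at hsplit
  rw [hfr, hsum, hsplit, ← heven, ← hodd]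

end main5

section main6
variable [FiniteDimensional ℂ L] {q f : L}

lemma finrank_lagrangian (B : LinearMap.BilinForm ℂ L)
    (hBnondeg : ∀ x : L, (∀ y : L, B x y = 0) → x = 0)
    (hBinv : ∀ x y z : L, B ⁅x, y⁆ z = B x ⁅y, z⁆)
    (hgood : IsGoodGrading q f)
    {l : Submodule ℂ L} (hl1 : l ≤ gSp q 1)
    (hiso : ∀ x ∈ l, ∀ y ∈ l, B f ⁅x, y⁆ = 0)
    (hmax : ∀ x ∈ gSp q 1, (∀ y ∈ l, B f ⁅x, y⁆ = 0) → x ∈ l) :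
    2 * finrank ℂ l = finrank ℂ (gSp q 1) := by
  classical
  set φ : gSp q 1 →ₗ[ℂ] Module.Dual ℂ l :=
    (B ∘ₗ ((ad ℂ L f) ∘ₗ (gSp q 1).subtype)).domRestrict₂ l with hφ
  have hφ_apply : ∀ (x : gSp q 1) (y : l), φ x y = B f ⁅(x : L), (y : L)⁆ := by
    intro x y
    have : φ x y = B ⁅f, (x : L)⁆ (y : L) := rfl
    rw [this, hBinv]
  have hker : LinearMap.ker φ = l.comap (gSp q 1).subtype := by
    ext x
    simp only [LinearMap.mem_ker, Submodule.mem_comap, Submodule.subtype_apply]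
    constructor
    · intro h
      refine hmax x.1 x.2 fun y hy => ?_
      have := congrArg (fun g => g ⟨y, hy⟩) h
      simpa [hφ_apply] using this
    · intro hx
      ext y
      rw [hφ_apply]
      exact hiso x.1 hx y.1 y.2
  have hkerrank : finrank ℂ ↥(LinearMap.ker φ) = finrank ℂ l := by
    rw [hker]
    have := (Submodule.equivSubtypeMap (gSp q 1) (l.comap (gSp q 1).subtype)).finrank_eq
    rw [this, Submodule.map_comap_subtype, inf_eq_right.mpr hl1]
  have hsurj : Function.Surjective φ := by
    intro ξ
    obtain ⟨ξL, hξL⟩ := Subspace.dualRestrict_surjective (W := l) ξ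
    have hBbij : Function.Surjective (B : L →ₗ[ℂ] Module.Dual ℂ L) := by
      have hinj : Function.Injective (B : L →ₗ[ℂ] Module.Dual ℂ L) := by
        rw [← LinearMap.ker_eq_bot, Submodule.eq_bot_iff]
        intro x hx
        exact hBnondeg x fun y => by
          have := congrArg (fun g => g y) (LinearMap.mem_ker.mp hx)
          simpa using this
      exact (LinearMap.injective_iff_surjective_of_finrank_eq_finrank
        Subspace.dual_finrank_eq.symm).mp hinj
    obtain ⟨z, hz⟩ := hBbij ξL
    obtain ⟨c, hc, hsum⟩ := (Submodule.mem_iSup_iff_exists_finsupp (gSp q) z).mp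
      (by rw [hgood.decomp]; trivial)
    have hzs : ∑ j ∈ c.support, c j = z := by rw [← hsum]; simp [Finsupp.sum]
    have hw : c (-1) ∈ gSp q (1 - 2) := by
      rw [show (1 : ℤ) - 2 = -1 by norm_num]
      exact hc (-1)
    obtain ⟨x, hx1, hfx⟩ := hgood.surj 1 le_rfl (c (-1)) hw
    refine ⟨⟨x, hx1⟩, ?_⟩
    ext y
    rw [hφ_apply, ← hBinv, hfx]
    have h1 : B z y.1 = ∑ j ∈ c.support, B (c j) y.1 := by
      rw [← hzs, map_sum, LinearMap.sum_apply]
    have h2 : ∑ j ∈ c.support, B (c j) y.1 = B (c (-1)) y.1 := by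
      refine Finset.sum_eq_single (-1) (fun j _ hj => ?_) (fun h => ?_)
      · exact B_apply_eq_zero B hBinv (by omega) (hc j) (hl1 y.2)
      · rw [Finsupp.notMem_support_iff.mp h, map_zero, LinearMap.zero_apply]
    have h3 : B z y.1 = ξ y := by
      rw [hz] at *
      calc ξL y.1 = l.dualRestrict ξL y := rfl
        _ = ξ y := by rw [hξL]
    rw [← h2, ← h1, h3]
  have hr := LinearMap.finrank_range_add_finrank_ker φ
  rw [LinearMap.range_eq_top.mpr hsurj, finrank_top, hkerrank, Subspace.dual_finrank_eq] at hr
  omega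

end main6

section main7
variable [FiniteDimensional ℂ L] {q f : L}

lemma finrank_L_eq (B : LinearMap.BilinForm ℂ L)
    (hBnondeg : ∀ x : L, (∀ y : L, B x y = 0) → x = 0)
    (hBinv : ∀ x y z : L, B ⁅x, y⁆ z = B x ⁅y, z⁆)
    (hgood : IsGoodGrading q f) {N : ℕ} (hN1 : 1 ≤ N)
    (hN : ∀ j : ℤ, (N : ℤ) < |j| → gSp q j = ⊥) :
    finrank ℂ L =
      finrank ℂ (gSp q 0) + 2 * ∑ j ∈ Finset.Icc (1 : ℤ) (N : ℤ), finrank ℂ (gSp q j) := by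
  classical
  have htop : (⊤ : Submodule ℂ L) = ⨆ j ∈ Finset.Icc (-(N : ℤ)) (N : ℤ), gSp q j := by
    rw [← hgood.decomp]
    refine iSup_eq_sup_finset _ fun j hj => ?_
    rw [Finset.mem_Icc] at hj
    refine hN j ?_
    rcases le_or_gt 0 j with h | h
    · rw [abs_of_nonneg h]; omega
    · rw [abs_of_neg h]; omega
  have h1 : finrank ℂ L = ∑ j ∈ Finset.Icc (-(N : ℤ)) (N : ℤ), finrank ℂ (gSp q j) := by
    rw [← finrank_top ℂ L]
    conv_lhs => rw [htop]
    exact finrank_iSup_finset (gSp_indep q) _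
  have hsplit : Finset.Icc (-(N : ℤ)) (N : ℤ) =
      (Finset.Icc (-(N : ℤ)) (-1)) ∪ ({(0 : ℤ)} ∪ Finset.Icc (1 : ℤ) (N : ℤ)) := by
    ext j
    simp only [Finset.mem_Icc, Finset.mem_union, Finset.mem_singleton]
    omega
  have hd1 : Disjoint (Finset.Icc (-(N : ℤ)) (-1)) ({(0 : ℤ)} ∪ Finset.Icc (1 : ℤ) (N : ℤ)) := by
    rw [Finset.disjoint_left]
    intro j hj hj'
    simp only [Finset.mem_Icc, Finset.mem_union, Finset.mem_singleton] at hj hj'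
    omega
  have hd2 : Disjoint ({(0 : ℤ)} : Finset ℤ) (Finset.Icc (1 : ℤ) (N : ℤ)) := by
    rw [Finset.disjoint_left]
    intro j hj hj'
    simp only [Finset.mem_Icc, Finset.mem_singleton] at hj hj'
    omega
  have himg : Finset.Icc (-(N : ℤ)) (-1) = (Finset.Icc (1 : ℤ) (N : ℤ)).image (fun j => -j) := by
    ext j
    simp only [Finset.mem_Icc, Finset.mem_image]
    constructor
    · intro h; exact ⟨-j, by omega, by omega⟩
    · rintro ⟨a, ha, rfl⟩; omega
  have hneg : ∑ j ∈ Finset.Icc (-(N : ℤ)) (-1), finrank ℂ (gSp q j) =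
      ∑ j ∈ Finset.Icc (1 : ℤ) (N : ℤ), finrank ℂ (gSp q j) := by
    rw [himg, Finset.sum_image (fun a _ b _ hab => by omega)]
    exact Finset.sum_congr rfl fun j _ =>
      (finrank_gSp_symm B hBnondeg hBinv hgood j).symm
  rw [h1, hsplit, Finset.sum_union hd1, Finset.sum_union hd2, hneg, Finset.sum_singleton]
  ring

lemma finrank_m_eq (hgood : IsGoodGrading q f)
    {l : Submodule ℂ L} (hl1 : l ≤ gSp q 1) {N : ℕ}
    (hN : ∀ j : ℤ, (N : ℤ) < |j| → gSp q j = ⊥) :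
    finrank ℂ ↥(l ⊔ ⨆ j : ℤ, ⨆ _ : 2 ≤ j, gSp q j) =
      finrank ℂ l + ∑ j ∈ Finset.Icc (2 : ℤ) (N : ℤ), finrank ℂ (gSp q j) := by
  classical
  have hQ : (⨆ j : ℤ, ⨆ _ : 2 ≤ j, gSp q j) = ⨆ j ∈ Finset.Icc (2 : ℤ) (N : ℤ), gSp q j :=
    F_eq_iSup_Icc hN 2
  have hdisj : Disjoint l (⨆ j ∈ Finset.Icc (2 : ℤ) (N : ℤ), gSp q j) := by
    refine Disjoint.mono hl1 ?_ ((gSp_indep q) 1)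
    refine iSup₂_le fun j hj => ?_
    rw [Finset.mem_Icc] at hj
    exact le_iSup₂ (f := fun j (_ : j ≠ 1) => gSp q j) j (by omega)
  rw [hQ]
  have h1 := Submodule.finrank_sup_add_finrank_inf_eq l
    (⨆ j ∈ Finset.Icc (2 : ℤ) (N : ℤ), gSp q j)
  rw [hdisj.eq_bot] at h1
  simp only [finrank_bot, add_zero] at h1
  rw [h1, finrank_iSup_finset (gSp_indep q) _]

end main7

/-- Basic properties of a good algebra `𝔪`: it is a Lie subalgebra consisting of
ad-nilpotent elements, `χ = B(f,·)` restricts to a character of `𝔪`, and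
`2 dim 𝔪 = dim 𝔤 − dim ker (ad f)`. -/
theorem good_algebra_properties
    [FiniteDimensional ℂ L] [LieAlgebra.IsSimple ℂ L]
    (B : LinearMap.BilinForm ℂ L)
    (hBsymm : ∀ x y : L, B x y = B y x)
    (hBnondeg : ∀ x : L, (∀ y : L, B x y = 0) → x = 0)
    (hBinv : ∀ x y z : L, B ⁅x, y⁆ z = B x ⁅y, z⁆)
    (q f : L) (hfnil : IsNilpotent (ad ℂ L f))
    (hgood : IsGoodGrading q f)
    (m : Submodule ℂ L) (hm : IsGoodAlgebra B q f m) :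
    (∀ x ∈ m, ∀ y ∈ m, ⁅x, y⁆ ∈ m) ∧
    (∀ z ∈ m, IsNilpotent (ad ℂ L z)) ∧
    (∀ x ∈ m, ∀ y ∈ m, B f ⁅x, y⁆ = 0) ∧
    2 * Module.finrank ℂ m = Module.finrank ℂ L - Module.finrank ℂ (LinearMap.ker (ad ℂ L f)) := by
  classical
  obtain ⟨l, hl1, hiso, hmax, hmeq⟩ := hm
  obtain ⟨N, hN1, hN⟩ := exists_gSp_bound q
  have hF2 : F q 2 = ⨆ j : ℤ, ⨆ _ : 2 ≤ j, gSp q j := rfl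
  have hmsup : m = l ⊔ F q 2 := by rw [hmeq, hF2]
  have hmF1 : m ≤ F q 1 := by
    rw [hmsup]
    exact sup_le (hl1.trans (gSp_le_F le_rfl)) (F_antitone (by norm_num))
  have hQm : F q 2 ≤ m := by rw [hmsup]; exact le_sup_right
  -- (i) closure under bracket
  have hclosed : ∀ x ∈ m, ∀ y ∈ m, ⁅x, y⁆ ∈ m := by
    intro x hx y hy
    have h := lie_F (hmF1 hx) (hmF1 hy)
    rw [show (1 : ℤ) + 1 = 2 by norm_num] at h
    exact hQm h
  -- (ii) ad-nilpotency
  have hnil : ∀ z ∈ m, IsNilpotent (ad ℂ L z) := by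
    intro z hz
    have hzF : z ∈ F q 1 := hmF1 hz
    have key : ∀ (n : ℕ) (x : L), x ∈ F q (-(N : ℤ)) →
        ((ad ℂ L z) ^ n) x ∈ F q (-(N : ℤ) + n) := by
      intro n
      induction n with
      | zero => intro x hx; simpa using hx
      | succ n ih =>
        intro x hx
        rw [pow_succ']
        have h := lie_F hzF (ih x hx)
        rw [show (1 : ℤ) + (-(N : ℤ) + n) = -(N : ℤ) + (n + 1 : ℕ) by push_cast; ring] at h
        simpa [ad_apply] using h
    refine ⟨2 * N + 1, ?_⟩
    ext x
    have hx : x ∈ F q (-(N : ℤ)) := top_le_F hgood hN trivial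
    have h := key (2 * N + 1) x hx
    rw [F_eq_bot hN (by push_cast; omega)] at h
    simpa using h
  -- (iii) character
  have hchar : ∀ x ∈ m, ∀ y ∈ m, B f ⁅x, y⁆ = 0 := by
    intro x hx y hy
    rw [hmsup] at hx hy
    obtain ⟨a, ha, b, hb, rfl⟩ := Submodule.mem_sup.mp hx
    obtain ⟨c, hc, d, hd, rfl⟩ := Submodule.mem_sup.mp hy
    have haF : a ∈ F q 1 := hl1.trans (gSp_le_F le_rfl) ha
    have hcF : c ∈ F q 1 := hl1.trans (gSp_le_F le_rfl) hc
    have h1 : B f ⁅a, c⁆ = 0 := hiso a ha c hc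
    have h2 : B f ⁅a, d⁆ = 0 := by
      have h := lie_F haF hd
      rw [show (1 : ℤ) + 2 = 3 by norm_num] at h
      exact B_f_eq_zero_F B hBinv hgood h
    have h3 : B f ⁅b, c⁆ = 0 := by
      have h := lie_F hb hcF
      rw [show (2 : ℤ) + 1 = 3 by norm_num] at h
      exact B_f_eq_zero_F B hBinv hgood h
    have h4 : B f ⁅b, d⁆ = 0 := by
      have h := lie_F hb hd
      rw [show (2 : ℤ) + 2 = 4 by norm_num] at h
      exact B_f_eq_zero_F B hBinv hgood (F_antitone (by norm_num) h)
    rw [add_lie, lie_add, lie_add, map_add, map_add, map_add, h1, h2, h3, h4]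
    ring
  refine ⟨hclosed, hnil, hchar, ?_⟩
  -- (iv) dimension count
  have hL := finrank_L_eq B hBnondeg hBinv hgood hN1 hN
  have hK := finrank_ker_ad_f hgood hN
  have hm' : finrank ℂ m = finrank ℂ l +
      ∑ j ∈ Finset.Icc (2 : ℤ) (N : ℤ), finrank ℂ (gSp q j) := by
    rw [hmeq]
    exact finrank_m_eq hgood hl1 hN
  have hlag := finrank_lagrangian B hBnondeg hBinv hgood hl1 hiso hmax
  have hsym1 : finrank ℂ (gSp q (1 : ℤ)) = finrank ℂ (gSp q (-1 : ℤ)) :=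
    finrank_gSp_symm B hBnondeg hBinv hgood 1
  have hIcc : Finset.Icc (1 : ℤ) (N : ℤ) = insert (1 : ℤ) (Finset.Icc (2 : ℤ) (N : ℤ)) := by
    ext j
    simp only [Finset.mem_Icc, Finset.mem_insert]
    omega
  have hsum1 : ∑ j ∈ Finset.Icc (1 : ℤ) (N : ℤ), finrank ℂ (gSp q j) =
      finrank ℂ (gSp q (1 : ℤ)) + ∑ j ∈ Finset.Icc (2 : ℤ) (N : ℤ), finrank ℂ (gSp q j) := by
    rw [hIcc, Finset.sum_insert (by simp [Finset.mem_Icc])]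
  omega
end
end

section
/- Let f₁ ∈ 𝔤 be ad-nilpotent and let the grading by q₁ be good for f₁. Let q₂ ∈ 𝔤 be such that ad(q₂) is diagonalizable with integer eigenvalues, ⁅q₁,q₂⁆ = 0, and ⁅q₂ − q₁, f₁⁆ = 0. Then f₁ ∈ 𝔤_{−2}(q₂), and there exists an sl₂-triple (e₁, h₁, f₁) with e₁ ∈ 𝔤₂(q₁) ∩ 𝔤₂(q₂) and h₁ ∈ 𝔤₀(q₁) ∩ 𝔤₀(q₂). -/
open LieAlgebra Module

noncomputable section

variable {L : Type*} [LieRing L] [LieAlgebra ℂ L]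

lemma gSp_congr {q : L} {i j : ℤ} (h : i = j) : gSp q i = gSp q j := by rw [h]


lemma gSp_sum_eq_zero {q : L} (s : Finset ℤ) (d : ℤ → ℤ)
    (hd : ∀ i ∈ s, ∀ j ∈ s, d i = d j → i = j) (c : ℤ → L)
    (hc : ∀ i ∈ s, c i ∈ gSp q (d i)) (h : ∑ i ∈ s, c i = 0) :
    ∀ i ∈ s, c i = 0 := by
  classical
  induction s using Finset.induction_on generalizing c with
  | empty => simp
  | @insert a s ha ih =>
    have hmem : ∀ i ∈ s, i ∈ insert a s := fun i hi => Finset.mem_insert_of_mem hi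
    have hane : ∀ i ∈ s, d i ≠ d a := by
      intro i hi hda
      exact ha (hd i (hmem i hi) a (Finset.mem_insert_self a s) hda ▸ hi)
    set F : L →ₗ[ℂ] L := (ad ℂ L q) - ((d a : ℂ) • (1 : Module.End ℂ L)) with hF
    have hFc : ∀ i ∈ insert a s, F (c i) = ((d i : ℂ) - (d a : ℂ)) • c i := by
      intro i hi
      have := hc i hi
      rw [mem_gSp] at this
      simp [hF, LinearMap.sub_apply, ad_apply, this, sub_smul]
    have hsum0 : ∑ i ∈ s, ((d i : ℂ) - (d a : ℂ)) • c i = 0 := by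
      have h0 : F (∑ i ∈ insert a s, c i) = 0 := by rw [h]; simp
      rw [map_sum] at h0
      rw [Finset.sum_congr rfl (fun i hi => (hFc i (hmem i hi)).symm)]
      rw [Finset.sum_insert ha] at h0
      rw [hFc a (Finset.mem_insert_self a s)] at h0
      simpa using h0
    have hzs : ∀ i ∈ s, c i = 0 := by
      have := ih (fun i hi j hj => hd i (hmem i hi) j (hmem j hj))
        (fun i => ((d i : ℂ) - (d a : ℂ)) • c i)
        (fun i hi => Submodule.smul_mem _ _ (hc i (hmem i hi))) hsum0
      intro i hi
      have hne : ((d i : ℂ) - (d a : ℂ)) ≠ 0 := by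
        have : (d i : ℂ) ≠ (d a : ℂ)  := by
          exact_mod_cast fun hh => hane i hi (by exact_mod_cast hh)
        exact sub_ne_zero_of_ne this
      exact (smul_eq_zero.mp (this i hi)).resolve_left hne
    intro i hi
    rcases Finset.mem_insert.mp hi with rfl | hi'
    · have := h
      rw [Finset.sum_insert ha, Finset.sum_congr rfl hzs, Finset.sum_const_zero,
        add_zero] at this
      exact this
    · exact hzs i hi'


lemma gSp_decompose {q : L} (hq : (⨆ j : ℤ, gSp q j) = ⊤) (x : L) :
    ∃ m : ℤ →₀ L, (∀ j, m j ∈ gSp q j) ∧ ∑ j ∈ m.support, m j = x := by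
  have hx : x ∈ ⨆ j : ℤ, gSp q j := hq ▸ Submodule.mem_top
  obtain ⟨m, hm, hsum⟩ := (Submodule.mem_iSup_iff_exists_finsupp _ x).mp hx
  exact ⟨m, hm, hsum⟩


lemma gSp_pair_zero (Φ : LinearMap.BilinForm ℂ L)
    (hΦinv : ∀ x y z : L, Φ ⁅x, y⁆ z = Φ x ⁅y, z⁆)
    {q x y : L} {a b : ℤ} (hx : x ∈ gSp q a) (hy : y ∈ gSp q b) (hab : a + b ≠ 0) :
    Φ x y = 0 := by
  have key : ((a : ℂ) + (b : ℂ)) * Φ x y = 0 := by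
    have h2 : ⁅q, x⁆ = -⁅x, q⁆ := by rw [← lie_skew x q, neg_neg]
    have h1 : Φ ⁅q, x⁆ y = -Φ x ⁅q, y⁆ := by
      rw [h2, map_neg, LinearMap.neg_apply, hΦinv]
    rw [mem_gSp] at hx hy
    rw [hx, hy] at h1
    simp only [LinearMap.map_smul, LinearMap.smul_apply, smul_eq_mul, map_smul] at h1
    linear_combination h1
  have : ((a : ℂ) + (b : ℂ)) ≠ 0 := by
    have : ((a + b : ℤ) : ℂ) ≠ 0 := Int.cast_ne_zero.mpr hab
    push_cast at this; exact this
  exact (mul_eq_zero.mp key).resolve_left this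


lemma gSp_stable {q q' x : L} {j : ℤ} (hqq' : ⁅q, q'⁆ = 0) (hx : x ∈ gSp q j) :
    ⁅q', x⁆ ∈ gSp q j := by
  rw [mem_gSp] at *
  rw [leibniz_lie, hqq', zero_lie, zero_add, hx, lie_smul]

/-- The trace of a power of an endomorphism all whose power traces vanish,
restricted over generalized eigenspaces; key nilpotency transfer. -/
lemma maxGenEigenspace_eq_bot_of_trace_pow {V : Type*} [AddCommGroup V] [Module ℂ V]
    [FiniteDimensional ℂ V] (C : Module.End ℂ V)
    (htr : ∀ k : ℕ, LinearMap.trace ℂ V (C ^ (k + 1)) = 0) :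
    ∀ μ : ℂ, μ ≠ 0 → C.maxGenEigenspace μ = ⊥ := by
  classical
  set N : ℂ → Submodule ℂ V := fun μ => C.maxGenEigenspace μ with hN
  have hInd := C.independent_maxGenEigenspace
  have hds := DirectSum.isInternal_submodule_of_iSupIndep_of_iSup_eq_top hInd
    (Module.End.iSup_maxGenEigenspace_eq_top C)
  have hfin : {μ | N μ ≠ ⊥}.Finite := WellFoundedGT.finite_ne_bot_of_iSupIndep hInd
  have hmaps : ∀ (μ : ℂ), Set.MapsTo ⇑C ↑(N μ) ↑(N μ) := fun μ =>
    Module.End.mapsTo_maxGenEigenspace_of_comm (rfl : C * C = C * C) μ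
  -- trace of restricted powers
  have key : ∀ (μ : ℂ) (k : ℕ) (h : Set.MapsTo ⇑(C ^ (k+1)) ↑(N μ) ↑(N μ)),
      LinearMap.trace ℂ (N μ) ((C ^ (k+1)).restrict h) = μ ^ (k+1) * (finrank ℂ (N μ) : ℂ) := by
    intro μ k h
    set R : Module.End ℂ (N μ) := C.restrict (hmaps μ) with hR
    have hres : (C ^ (k+1)).restrict h = R ^ (k+1) := by
      rw [hR, Module.End.pow_restrict (k+1) (hmaps μ)]
    set a : Module.End ℂ (N μ) := algebraMap ℂ _ μ with ha
    set b : Module.End ℂ (N μ) := R - a with hb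
    have hbnil : IsNilpotent b := by
      have h0 := Module.End.isNilpotent_restrict_maxGenEigenspace_sub_algebraMap C μ
      have : (C - algebraMap ℂ (Module.End ℂ V) μ).restrict
          (Module.End.mapsTo_maxGenEigenspace_of_comm (Algebra.mul_sub_algebraMap_commutes C μ) μ) = b := by
        apply LinearMap.ext
        intro v
        apply Subtype.ext
        simp [hb, hR, ha, LinearMap.restrict_apply, LinearMap.restrict_coe_apply, Module.algebraMap_end_apply]
        rfl
      rwa [this] at h0
    have hcomm : Commute a b := Algebra.commutes μ b
    have hRab : R = a + b := by rw [hb]; abel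
    rw [hres, hRab, Commute.add_pow hcomm (k+1), map_sum]
    have hterm : ∀ m ∈ Finset.range (k + 2), LinearMap.trace ℂ (N μ)
        (a ^ m * b ^ (k + 1 - m) * ((k+1).choose m : Module.End ℂ (N μ)))
        = if m = k + 1 then μ ^ (k+1) * (finrank ℂ (N μ) : ℂ) else 0 := by
      intro m hm
      rcases eq_or_ne m (k+1) with rfl | hne
      · rw [if_pos rfl]
        simp only [Nat.sub_self, pow_zero, mul_one, Nat.choose_self, Nat.cast_one]
        have h4 : a ^ (k+1) = algebraMap ℂ _ (μ ^ (k+1)) := by rw [ha, map_pow]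
        rw [h4, Algebra.algebraMap_eq_smul_one, map_smul, smul_eq_mul]
        congr 1
        rw [show (1 : Module.End ℂ (N μ)) = LinearMap.id from rfl, LinearMap.trace_id]
      · rw [if_neg hne]
        have hj : k + 1 - m ≠ 0 := by
          have : m < k + 1 := lt_of_le_of_ne (Nat.lt_succ_iff.mp (Finset.mem_range.mp hm)) hne
          omega
        have hbj : IsNilpotent (b ^ (k + 1 - m)) := by
          obtain ⟨n', hn'⟩ := hbnil
          exact ⟨n', by rw [← pow_mul, mul_comm, pow_mul, hn', zero_pow hj]⟩
        have hnil : IsNilpotent (a ^ m * b ^ (k + 1 - m) * ((k+1).choose m : Module.End ℂ (N μ))) := by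
          have h1 : Commute (a ^ m) (b ^ (k+1-m)) := (hcomm.pow_pow m _)
          have h2 : IsNilpotent (a ^ m * b ^ (k+1-m)) := h1.isNilpotent_mul_left hbj
          have h3 : Commute (a ^ m * b ^ (k+1-m)) (((k+1).choose m : Module.End ℂ (N μ))) :=
            (Nat.cast_commute ((k+1).choose m) (a ^ m * b ^ (k+1-m))).symm
          exact h3.isNilpotent_mul_right h2
        have := LinearMap.isNilpotent_trace_of_isNilpotent hnil
        rwa [isNilpotent_iff_eq_zero] at this
    rw [Finset.sum_congr rfl hterm, Finset.sum_ite_eq' (Finset.range (k+2)) (k+1)]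
    simp
  -- power sums vanish
  have hpows : ∀ k : ℕ, ∑ μ ∈ hfin.toFinset, μ ^ (k+1) * (finrank ℂ (N μ) : ℂ) = 0 := by
    intro k
    have hmapsk : ∀ (μ : ℂ), Set.MapsTo ⇑(C ^ (k+1)) ↑(N μ) ↑(N μ) := fun μ =>
      Module.End.mapsTo_maxGenEigenspace_of_comm (Commute.pow_right rfl (k+1)) μ
    have := LinearMap.trace_eq_sum_trace_restrict' hds hfin hmapsk
    rw [htr k] at this
    rw [← Finset.sum_congr rfl (fun μ _ => key μ k (hmapsk μ))]
    exact this.symm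
  -- polynomial trick
  intro μ hμ0
  by_contra hne
  have hμmem : μ ∈ hfin.toFinset := by simp [hfin.mem_toFinset, hN]; exact hne
  set s := hfin.toFinset with hs
  set p : Polynomial ℂ := Polynomial.X * ∏ ν ∈ s.erase μ, (Polynomial.X - Polynomial.C ν) with hp
  have hp0 : p.coeff 0 = 0 := by
    rw [Polynomial.coeff_zero_eq_eval_zero, hp]
    simp
  have hsum : ∑ ν ∈ s, (finrank ℂ (N ν) : ℂ) * p.eval ν = 0 := by
    have : ∀ ν ∈ s, (finrank ℂ (N ν) : ℂ) * p.eval ν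
        = ∑ i ∈ Finset.range (p.natDegree + 1), p.coeff i * (ν ^ i * (finrank ℂ (N ν) : ℂ)) := by
      intro ν _
      rw [Polynomial.eval_eq_sum_range, Finset.mul_sum]
      apply Finset.sum_congr rfl
      intro i _
      ring
    rw [Finset.sum_congr rfl this, Finset.sum_comm]
    apply Finset.sum_eq_zero
    intro i _
    rcases Nat.eq_zero_or_pos i with rfl | hi
    · rw [hp0]; simp
    · obtain ⟨k, rfl⟩ := Nat.exists_eq_add_of_lt hi
      rw [← Finset.mul_sum]
      rw [show 0 + k + 1 = k + 1 by omega]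
      rw [hpows k, mul_zero]
  have hothers : ∀ ν ∈ s, ν ≠ μ → (finrank ℂ (N ν) : ℂ) * p.eval ν = 0 := by
    intro ν hν hνμ
    have : p.eval ν = 0 := by
      rw [hp]
      simp only [Polynomial.eval_mul, Polynomial.eval_prod, Polynomial.eval_sub,
        Polynomial.eval_X, Polynomial.eval_C]
      apply mul_eq_zero_of_right
      exact Finset.prod_eq_zero (Finset.mem_erase.mpr ⟨hνμ, hν⟩) (by ring)
    rw [this, mul_zero]
  have hμterm : (finrank ℂ (N μ) : ℂ) * p.eval μ = 0 := by
    rw [Finset.sum_eq_single_of_mem μ hμmem hothers] at hsum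
    exact hsum
  have hpμ : p.eval μ ≠ 0 := by
    rw [hp]
    simp only [Polynomial.eval_mul, Polynomial.eval_prod, Polynomial.eval_sub,
      Polynomial.eval_X, Polynomial.eval_C]
    apply mul_ne_zero hμ0
    rw [Finset.prod_ne_zero_iff]
    intro ν hν
    have := (Finset.mem_erase.mp hν).1
    exact sub_ne_zero_of_ne (Ne.symm this)
  have hrk : (finrank ℂ (N μ) : ℂ) ≠ 0 := by
    have : finrank ℂ (N μ) ≠ 0 := by
      intro h0
      exact hne (Submodule.finrank_eq_zero.mp h0)
    exact_mod_cast this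
  exact hrk (by
    rcases mul_eq_zero.mp hμterm with h | h
    · exact h
    · exact absurd h hpμ)

lemma killing_orth [FiniteDimensional ℂ L] {f₁ q₁ x : L}
    (hf : f₁ ∈ gSp q₁ (-2)) (hx : x ∈ gSp q₁ 2)
    (h2 : ⁅f₁, ⁅f₁, x⁆⁆ = 0) : killingForm ℂ L f₁ x = 0 := by
  classical
  letI := LieRing.ofAssociativeRing (A := Module.End ℂ L)
  set A : Module.End ℂ L := ad ℂ L f₁ with hA
  set Bx : Module.End ℂ L := ad ℂ L x with hBx
  set D : Module.End ℂ L := ad ℂ L q₁ with hD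
  set C : Module.End ℂ L := ad ℂ L ⁅f₁, x⁆ with hCdef
  have hC : C = A * Bx - Bx * A := by
    rw [hCdef, hA, hBx, LieHom.map_lie, Ring.lie_def]
  have hAC : Commute A C := by
    have h := LieHom.map_lie (ad ℂ L) f₁ ⁅f₁, x⁆
    rw [h2, Ring.lie_def, map_zero] at h
    exact sub_eq_zero.mp h.symm
  have hy0 : ⁅f₁, x⁆ ∈ gSp q₁ 0 := by
    have := lie_mem_gSp hf hx
    rwa [show (-2 : ℤ) + 2 = 0 by ring] at this
  have hyq : ⁅q₁, ⁅f₁, x⁆⁆ = 0 := by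
    have := mem_gSp.mp hy0; simpa using this
  have hDC : Commute D C := by
    have h := LieHom.map_lie (ad ℂ L) q₁ ⁅f₁, x⁆
    rw [hyq, Ring.lie_def, map_zero] at h
    exact sub_eq_zero.mp h.symm
  have hDA : D * A - A * D = (-2 : ℂ) • A := by
    have hqf : ⁅q₁, f₁⁆ = (-2 : ℂ) • f₁ := by
      have := mem_gSp.mp hf; simpa using this
    have h := LieHom.map_lie (ad ℂ L) q₁ f₁
    rw [hqf, Ring.lie_def, map_smul] at h
    exact h.symm
  have htr : ∀ k : ℕ, LinearMap.trace ℂ L (C ^ (k+1)) = 0 := by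
    intro k
    have hAk : A * C ^ k = C ^ k * A := (hAC.pow_right k)
    have hpow : C ^ (k+1) = A * (Bx * C ^ k) - (Bx * C ^ k) * A := by
      calc C ^ (k+1) = C * C ^ k := by rw [pow_succ']
        _ = A * Bx * C ^ k - Bx * A * C ^ k := by rw [hC, sub_mul]
        _ = A * (Bx * C ^ k) - (Bx * C ^ k) * A := by
            rw [mul_assoc A Bx, mul_assoc Bx A, hAk, ← mul_assoc Bx (C ^ k) A]
    rw [hpow, map_sub, LinearMap.trace_mul_comm]
    exact sub_self _
  have hbot := maxGenEigenspace_eq_bot_of_trace_pow C htr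
  have hDCtr : LinearMap.trace ℂ L (D * C) = 0 := by
    have hInd := C.independent_maxGenEigenspace
    have hds := DirectSum.isInternal_submodule_of_iSupIndep_of_iSup_eq_top hInd
      (Module.End.iSup_maxGenEigenspace_eq_top C)
    have hfin : {μ : ℂ | C.maxGenEigenspace μ ≠ ⊥}.Finite :=
      WellFoundedGT.finite_ne_bot_of_iSupIndep hInd
    have hCDC : Commute C (D * C) := (hDC.symm).mul_right (Commute.refl C)
    have hmapsDC : ∀ μ : ℂ, Set.MapsTo ⇑(D * C) ↑(C.maxGenEigenspace μ) ↑(C.maxGenEigenspace μ) :=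
      fun μ => Module.End.mapsTo_maxGenEigenspace_of_comm hCDC μ
    rw [LinearMap.trace_eq_sum_trace_restrict' hds hfin hmapsDC]
    apply Finset.sum_eq_zero
    intro μ hμ
    rcases eq_or_ne μ 0 with rfl | hμ0
    · have hmapsD : Set.MapsTo ⇑D ↑(C.maxGenEigenspace 0) ↑(C.maxGenEigenspace 0) :=
        Module.End.mapsTo_maxGenEigenspace_of_comm hDC.symm 0
      have hmapsC : Set.MapsTo ⇑C ↑(C.maxGenEigenspace 0) ↑(C.maxGenEigenspace 0) :=
        Module.End.mapsTo_maxGenEigenspace_of_comm (Commute.refl C) 0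
      have hres : (D * C).restrict (hmapsDC 0) = D.restrict hmapsD * C.restrict hmapsC := by
        apply LinearMap.ext; intro v; apply Subtype.ext
        simp [LinearMap.restrict_apply, Module.End.mul_apply]
        rfl
      have hCnil : IsNilpotent (C.restrict hmapsC) := by
        have h0 := Module.End.isNilpotent_restrict_maxGenEigenspace_sub_algebraMap C 0
        have heq : ∀ (hh : Set.MapsTo ⇑(C - algebraMap ℂ (Module.End ℂ L) 0)
            ↑(C.maxGenEigenspace 0) ↑(C.maxGenEigenspace 0)),
            (C - algebraMap ℂ (Module.End ℂ L) 0).restrict hh = C.restrict hmapsC := by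
          intro hh
          apply LinearMap.ext; intro v; apply Subtype.ext
          simp [LinearMap.restrict_apply, LinearMap.restrict_coe_apply]
          rfl
        rwa [heq _] at h0
      have hcomm' : Commute (D.restrict hmapsD) (C.restrict hmapsC) :=
        LinearMap.restrict_commute hDC hmapsD hmapsC
      have hnil : IsNilpotent ((D * C).restrict (hmapsDC 0)) := by
        rw [hres]
        exact hcomm'.isNilpotent_mul_left hCnil
      have := LinearMap.isNilpotent_trace_of_isNilpotent hnil
      rwa [isNilpotent_iff_eq_zero] at this
    · have : C.maxGenEigenspace μ = ⊥ := hbot μ hμ0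
      exfalso
      rw [Set.Finite.mem_toFinset] at hμ
      exact hμ this
  have e1 : D * C = (D * A - A * D) * Bx + (A * (D * Bx) - (D * Bx) * A) := by
    rw [hC]; noncomm_ring
  have e2 : LinearMap.trace ℂ L (D * C) = (-2 : ℂ) • LinearMap.trace ℂ L (A * Bx) := by
    rw [e1, map_add, map_sub (LinearMap.trace ℂ L) (A * (D * Bx)),
      LinearMap.trace_mul_comm ℂ A (D * Bx), sub_self, add_zero, hDA, smul_mul_assoc, map_smul]
  have hABx : LinearMap.trace ℂ L (A * Bx) = 0 := by
    rw [e2, smul_eq_mul] at hDCtr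
    have h2' : (-2 : ℂ) ≠ 0 := by norm_num
    exact (mul_eq_zero.mp hDCtr).resolve_left h2'
  rw [killingForm_apply_apply, ← Module.End.mul_eq_comp]
  exact hABx

lemma bilin_inj [FiniteDimensional ℂ L] (Φ : LinearMap.BilinForm ℂ L)
    (hnd : ∀ x : L, (∀ y : L, Φ x y = 0) → x = 0) :
    Function.Injective (Φ : L →ₗ[ℂ] Module.Dual ℂ L) := by
  rw [← LinearMap.ker_eq_bot]
  ext x
  simp only [LinearMap.mem_ker, Submodule.mem_bot]
  constructor
  · intro hx
    exact hnd x (fun y => by rw [hx]; rfl)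
  · rintro rfl; simp

lemma bilin_surj [FiniteDimensional ℂ L] (Φ : LinearMap.BilinForm ℂ L)
    (hnd : ∀ x : L, (∀ y : L, Φ x y = 0) → x = 0) :
    Function.Surjective (Φ : L →ₗ[ℂ] Module.Dual ℂ L) :=
  (LinearMap.injective_iff_surjective_of_finrank_eq_finrank
    (Subspace.dual_finrank_eq).symm).mp (bilin_inj Φ hnd)

lemma mem_range_of_orth [FiniteDimensional ℂ L] (Φ : LinearMap.BilinForm ℂ L)
    (hnd : ∀ x : L, (∀ y : L, Φ x y = 0) → x = 0)
    (S : L →ₗ[ℂ] L) (hS : ∀ x y : L, Φ (S x) y = Φ x (S y)) (t : L)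
    (ht : ∀ x : L, S x = 0 → Φ t x = 0) : ∃ w : L, S w = t := by
  have hmem : (Φ : L →ₗ[ℂ] Module.Dual ℂ L) t ∈ (LinearMap.ker S).dualAnnihilator := by
    rw [Submodule.mem_dualAnnihilator]
    intro w hw
    exact ht w (LinearMap.mem_ker.mp hw)
  rw [← LinearMap.range_dualMap_eq_dualAnnihilator_ker] at hmem
  obtain ⟨g, hg⟩ := hmem
  obtain ⟨w, rfl⟩ := bilin_surj Φ hnd g
  refine ⟨w, bilin_inj Φ hnd ?_⟩
  rw [← hg]
  apply LinearMap.ext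
  intro z
  rw [LinearMap.dualMap_apply]
  exact hS w z

lemma killing_smul_aux [FiniteDimensional ℂ L] [LieAlgebra.IsSimple ℂ L]
    (B : LinearMap.BilinForm ℂ L)
    (hBnondeg : ∀ x : L, (∀ y : L, B x y = 0) → x = 0)
    (hBinv : ∀ x y z : L, B ⁅x, y⁆ z = B x ⁅y, z⁆) :
    ∃ c : ℂ, ∀ x y : L, killingForm ℂ L x y = c * B x y := by
  classical
  have hnt : Nontrivial L := by
    by_contra h
    rw [not_nontrivial_iff_subsingleton] at h
    exact LieAlgebra.IsSimple.non_abelian (R := ℂ) (L := L)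
      { trivial := fun x y => Subsingleton.elim _ _ }
  have hinj := bilin_inj B hBnondeg
  have hsurj := bilin_surj B hBnondeg
  let eB := LinearEquiv.ofBijective (B : L →ₗ[ℂ] Module.Dual ℂ L) ⟨hinj, hsurj⟩
  set φ : L →ₗ[ℂ] L := (eB.symm : Module.Dual ℂ L →ₗ[ℂ] L) ∘ₗ (killingForm ℂ L) with hφ
  have hφB : ∀ u : L, (B : L →ₗ[ℂ] Module.Dual ℂ L) (φ u) = killingForm ℂ L u := by
    intro u
    show eB (φ u) = _
    rw [hφ]
    simp only [LinearMap.coe_comp, Function.comp_apply, LinearEquiv.coe_coe]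
    exact eB.apply_symm_apply _
  have hφB' : ∀ u y : L, B (φ u) y = killingForm ℂ L u y := by
    intro u y
    exact DFunLike.congr_fun (hφB u) y
  have hκinv : ∀ x y z : L, killingForm ℂ L ⁅x, y⁆ z = killingForm ℂ L x ⁅y, z⁆ :=
    fun x y z => LieModule.traceForm_apply_lie_apply ℂ L L x y z
  have hBskew : ∀ w u y : L, B ⁅w, u⁆ y = - B u ⁅w, y⁆ := by
    intro w u y
    have h2 : ⁅w, u⁆ = -⁅u, w⁆ := by rw [← lie_skew u w, neg_neg]
    rw [h2, map_neg, LinearMap.neg_apply, hBinv]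
  have hκskew : ∀ w u y : L, killingForm ℂ L ⁅w, u⁆ y = - killingForm ℂ L u ⁅w, y⁆ := by
    intro w u y
    have h2 : ⁅w, u⁆ = -⁅u, w⁆ := by rw [← lie_skew u w, neg_neg]
    rw [h2, map_neg, LinearMap.neg_apply, hκinv]
  have hcomm : ∀ w u : L, φ ⁅w, u⁆ = ⁅w, φ u⁆ := by
    intro w u
    apply hinj
    apply LinearMap.ext
    intro y
    rw [hφB]
    show killingForm ℂ L ⁅w, u⁆ y = B ⁅w, φ u⁆ y
    rw [hκskew, hBskew, ← hφB' u ⁅w, y⁆]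
  obtain ⟨c, hc⟩ := Module.End.exists_eigenvalue (φ : Module.End ℂ L)
  obtain ⟨v, hv⟩ := hc.exists_hasEigenvector
  have hvmem : v ∈ LinearMap.ker ((φ : Module.End ℂ L) - c • (1 : Module.End ℂ L)) := by
    rw [LinearMap.mem_ker, LinearMap.sub_apply, LinearMap.smul_apply, Module.End.one_apply,
      sub_eq_zero]
    exact hv.apply_eq_smul
  set I : LieIdeal ℂ L :=
    { toSubmodule := LinearMap.ker ((φ : Module.End ℂ L) - c • (1 : Module.End ℂ L))
      lie_mem := by
        intro w m hm
        have hm' : φ m = c • m := by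
          have h0 : ((φ : Module.End ℂ L) - c • (1 : Module.End ℂ L)) m = 0 := hm
          rw [LinearMap.sub_apply, LinearMap.smul_apply, Module.End.one_apply,
            sub_eq_zero] at h0
          exact h0
        show ⁅w, m⁆ ∈ LinearMap.ker ((φ : Module.End ℂ L) - c • (1 : Module.End ℂ L))
        rw [LinearMap.mem_ker, LinearMap.sub_apply, LinearMap.smul_apply,
          Module.End.one_apply, sub_eq_zero]
        rw [hcomm w m, hm', lie_smul] } with hI
  have hIne : I ≠ ⊥ := by
    intro hbot
    have : v ∈ I := hvmem
    rw [hbot] at this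
    exact hv.right (by simpa using this)
  have hItop : I = ⊤ := (LieAlgebra.IsSimple.eq_bot_or_eq_top I).resolve_left hIne
  have hall : ∀ u : L, φ u = c • u := by
    intro u
    have hu : u ∈ I := by rw [hItop]; exact LieSubmodule.mem_top u
    have h0 : ((φ : Module.End ℂ L) - c • (1 : Module.End ℂ L)) u = 0 := hu
    rw [LinearMap.sub_apply, LinearMap.smul_apply, Module.End.one_apply,
      sub_eq_zero] at h0
    exact h0
  refine ⟨c, fun u y => ?_⟩
  rw [← hφB' u y, hall u, map_smul, LinearMap.smul_apply, smul_eq_mul]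

lemma killing_q_ne [FiniteDimensional ℂ L] {q : L} (hq : (⨆ j : ℤ, gSp q j) = ⊤)
    {j₀ : ℤ} (hj₀ : j₀ ≠ 0) (hbot : gSp q j₀ ≠ ⊥) :
    killingForm ℂ L q q ≠ 0 := by
  classical
  set D : Module.End ℂ L := ad ℂ L q with hD
  have hgse : (fun j : ℤ => gSp q j) = fun j : ℤ => D.eigenspace (j : ℂ) := by
    funext j
    ext v
    rw [mem_gSp, Module.End.mem_eigenspace_iff]
    rfl
  have hInd : iSupIndep (fun j : ℤ => gSp q j) := by
    rw [hgse]
    exact (Module.End.eigenspaces_iSupIndep D).comp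
      (fun a b h => by exact_mod_cast h)
  have hds := DirectSum.isInternal_submodule_of_iSupIndep_of_iSup_eq_top hInd hq
  have hfin : {j : ℤ | gSp q j ≠ ⊥}.Finite := WellFoundedGT.finite_ne_bot_of_iSupIndep hInd
  have hDv : ∀ (j : ℤ) (v : L), v ∈ gSp q j → D v = (j : ℂ) • v := by
    intro j v hv
    rw [hD, ad_apply]
    exact mem_gSp.mp hv
  have hmaps : ∀ j : ℤ, Set.MapsTo ⇑(D * D) ↑(gSp q j) ↑(gSp q j) := by
    intro j v hv
    have : (D * D) v = ((j : ℂ)^2) • v := by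
      rw [Module.End.mul_apply, hDv j v hv, map_smul, hDv j v hv, smul_smul]
      ring_nf
    rw [this]
    exact Submodule.smul_mem _ _ hv
  have htr : killingForm ℂ L q q = LinearMap.trace ℂ L (D * D) := by
    rw [killingForm_apply_apply, Module.End.mul_eq_comp]
  rw [htr, LinearMap.trace_eq_sum_trace_restrict' hds hfin hmaps]
  have hterm : ∀ j ∈ hfin.toFinset, LinearMap.trace ℂ (gSp q j) ((D * D).restrict (hmaps j))
      = ((j^2 * (finrank ℂ (gSp q j) : ℤ) : ℤ) : ℂ) := by
    intro j hj
    have hres : (D * D).restrict (hmaps j) = ((j : ℂ)^2) • LinearMap.id := by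
      apply LinearMap.ext
      intro v
      apply Subtype.ext
      have : (D * D) (v : L) = ((j : ℂ)^2) • (v : L) := by
        rw [Module.End.mul_apply, hDv j v v.2, map_smul, hDv j v v.2, smul_smul]
        ring_nf
      simp [LinearMap.restrict_apply, this]
      exact this
    rw [hres, map_smul, LinearMap.trace_id, smul_eq_mul]
    push_cast
    ring
  rw [Finset.sum_congr rfl hterm]
  have hpos : 0 < ∑ j ∈ hfin.toFinset, j^2 * (finrank ℂ (gSp q j) : ℤ) := by
    apply Finset.sum_pos'
    · intro j hj
      positivity
    · refine ⟨j₀, ?_, ?_⟩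
      · rw [Set.Finite.mem_toFinset]; exact hbot
      · have h1 : 0 < j₀^2 := by
          rcases hj₀.lt_or_gt with h | h <;> nlinarith
        have h2 : 0 < finrank ℂ (gSp q j₀) := by
          by_contra hcon
          push_neg at hcon
          have : finrank ℂ (gSp q j₀) = 0 := by omega
          exact hbot (Submodule.finrank_eq_zero.mp this)
        have h2' : (0 : ℤ) < (finrank ℂ (gSp q j₀) : ℤ) := by exact_mod_cast h2
        exact mul_pos h1 h2'
  have hne : (∑ j ∈ hfin.toFinset, j^2 * (finrank ℂ (gSp q j) : ℤ)) ≠ 0 := hpos.ne'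
  exact_mod_cast hne

/-- If the grading by `q₁` is good for `f₁`, `ad q₂` is diagonalizable with integer
eigenvalues, `⁅q₁, q₂⁆ = 0` and `⁅q₂ − q₁, f₁⁆ = 0`, then `f₁ ∈ 𝔤_{−2}(q₂)` and `f₁` embeds
in an sl₂-triple `(e₁, h₁, f₁)` with `e₁ ∈ 𝔤₂(q₁) ∩ 𝔤₂(q₂)` and `h₁ ∈ 𝔤₀(q₁) ∩ 𝔤₀(q₂)`. -/
theorem nice_sl₂_triple
    [FiniteDimensional ℂ L] [LieAlgebra.IsSimple ℂ L]
    (B : LinearMap.BilinForm ℂ L)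
    (hBsymm : ∀ x y : L, B x y = B y x)
    (hBnondeg : ∀ x : L, (∀ y : L, B x y = 0) → x = 0)
    (hBinv : ∀ x y z : L, B ⁅x, y⁆ z = B x ⁅y, z⁆)
    (f₁ q₁ q₂ : L)
    (hnil₁ : IsNilpotent (ad ℂ L f₁))
    (hgood₁ : IsGoodGrading q₁ f₁)
    (hq₂diag : (⨆ j : ℤ, gSp q₂ j) = ⊤)
    (hq₁q₂ : ⁅q₁, q₂⁆ = 0)
    (hq₀f₁ : ⁅q₂ - q₁, f₁⁆ = 0) :
    f₁ ∈ gSp q₂ (-2) ∧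
    ∃ e₁ h₁ : L,
      ⁅h₁, e₁⁆ = (2 : ℂ) • e₁ ∧ ⁅h₁, f₁⁆ = (-2 : ℂ) • f₁ ∧ ⁅e₁, f₁⁆ = h₁ ∧
      e₁ ∈ gSp q₁ 2 ∧ e₁ ∈ gSp q₂ 2 ∧ h₁ ∈ gSp q₁ 0 ∧ h₁ ∈ gSp q₂ 0 := by
  classical
  have hq1f : ⁅q₁, f₁⁆ = ((-2 : ℤ) : ℂ) • f₁ := mem_gSp.mp hgood₁.f_mem
  have hf2 : f₁ ∈ gSp q₂ (-2) := by
    rw [mem_gSp]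
    have hsub : ⁅q₂ - q₁, f₁⁆ = ⁅q₂, f₁⁆ - ⁅q₁, f₁⁆ := sub_lie _ _ _
    rw [hq₀f₁] at hsub
    have h22 : ⁅q₂, f₁⁆ = ⁅q₁, f₁⁆ := sub_eq_zero.mp hsub.symm
    rw [h22, hq1f]
  refine ⟨hf2, ?_⟩
  by_cases hf0 : f₁ = 0
  · exact ⟨0, 0, by simp, by simp [hf0], by simp,
      Submodule.zero_mem _, Submodule.zero_mem _, Submodule.zero_mem _, Submodule.zero_mem _⟩
  -- κ is proportional to B with a nonzero constant, hence nondegenerate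
  obtain ⟨c, hc⟩ := killing_smul_aux B hBnondeg hBinv
  have hbotne : gSp q₁ (-2) ≠ ⊥ := by
    rw [Submodule.ne_bot_iff]
    exact ⟨f₁, hgood₁.f_mem, hf0⟩
  have hκqq := killing_q_ne hgood₁.decomp (show (-2 : ℤ) ≠ 0 by norm_num) hbotne
  have hcne : c ≠ 0 := by
    intro h0
    exact hκqq (by rw [hc q₁ q₁, h0, zero_mul])
  have hκnd : ∀ x : L, (∀ y : L, killingForm ℂ L x y = 0) → x = 0 := by
    intro x hx
    apply hBnondeg x
    intro y
    have h1 := hc x y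
    rw [hx y] at h1
    exact ((mul_eq_zero.mp h1.symm).resolve_left hcne)
  have hκinv : ∀ x y z : L, killingForm ℂ L ⁅x, y⁆ z = killingForm ℂ L x ⁅y, z⁆ :=
    fun x y z => LieModule.traceForm_apply_lie_apply ℂ L L x y z
  have hκskew : ∀ w u y : L, killingForm ℂ L ⁅w, u⁆ y = - killingForm ℂ L u ⁅w, y⁆ := by
    intro w u y
    have h2 : ⁅w, u⁆ = -⁅u, w⁆ := by rw [← lie_skew u w, neg_neg]
    rw [h2, map_neg, LinearMap.neg_apply, hκinv]
  -- the square of `ad f₁`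
  set S : L →ₗ[ℂ] L := ((ad ℂ L f₁ : Module.End ℂ L) ∘ₗ (ad ℂ L f₁ : Module.End ℂ L))
    with hSdef
  have hSapp : ∀ x : L, S x = ⁅f₁, ⁅f₁, x⁆⁆ := by
    intro x
    rw [hSdef]
    simp [LinearMap.comp_apply, ad_apply]
  have hSsa : ∀ x y : L, killingForm ℂ L (S x) y = killingForm ℂ L x (S y) := by
    intro x y
    rw [hSapp, hSapp]
    rw [hκskew f₁ ⁅f₁, x⁆ y, hκskew f₁ x ⁅f₁, y⁆, neg_neg]
  -- f₁ is κ-orthogonal to the kernel of S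
  have horth : ∀ x : L, S x = 0 → killingForm ℂ L f₁ x = 0 := by
    intro x hSx
    obtain ⟨m, hm, hsum⟩ := gSp_decompose hgood₁.decomp x
    have hcomp : ∀ j ∈ m.support, S (m j) = 0 := by
      apply gSp_sum_eq_zero (q := q₁) m.support (fun j => j - 4)
        (fun i _ j _ h => by have h' : i - 4 = j - 4 := h; omega) (fun j => S (m j))
      · intro i hi
        have h1 := lie_mem_gSp hgood₁.f_mem (lie_mem_gSp hgood₁.f_mem (hm i))
        rw [show (-2 : ℤ) + ((-2) + i) = i - 4 by ring] at h1
        rw [hSapp]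
        exact h1
      · rw [← map_sum, hsum, hSx]
    rw [← hsum, map_sum]
    apply Finset.sum_eq_zero
    intro j hj
    rcases eq_or_ne j 2 with rfl | hj2
    · have h2 := hcomp 2 hj
      rw [hSapp] at h2
      exact killing_orth hgood₁.f_mem (hm 2) h2
    · exact gSp_pair_zero (killingForm ℂ L) hκinv hgood₁.f_mem (hm j) (by omega)
  obtain ⟨e₀, he₀⟩ := mem_range_of_orth (killingForm ℂ L) hκnd S hSsa f₁ horth
  set e : L := (-2 : ℂ) • e₀ with he
  have hSe : S e = (-2 : ℂ) • f₁ := by rw [he, map_smul, he₀]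
  -- extraction of degree-2 components
  have extract : ∀ (q : L) (v : L) (m : ℤ →₀ L), (∀ j, m j ∈ gSp q j) →
      f₁ ∈ gSp q (-2) → (∑ j ∈ m.support, m j = v) → (S v = (-2 : ℂ) • f₁) →
      S (m 2) = (-2 : ℂ) • f₁ := by
    intro q v m hmm hfq hsumv hSv
    set s : Finset ℤ := insert 2 m.support with hs
    have hsum' : ∑ j ∈ s, m j = v := by
      by_cases h2m : 2 ∈ m.support
      · rw [hs, Finset.insert_eq_self.mpr h2m]
        exact hsumv
      · rw [hs, Finset.sum_insert h2m, Finsupp.notMem_support_iff.mp h2m, zero_add]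
        exact hsumv
    have hkey : ∀ i ∈ s, (S (m i) - (if i = 2 then (-2 : ℂ) • f₁ else 0)) = 0 := by
      apply gSp_sum_eq_zero (q := q) s (fun j => j - 4) (fun i _ j _ h => by have h' : i - 4 = j - 4 := h; omega)
      · intro i hi
        apply Submodule.sub_mem
        · have h1 := lie_mem_gSp hfq (lie_mem_gSp hfq (hmm i))
          rw [show (-2 : ℤ) + ((-2) + i) = i - 4 by ring] at h1
          rw [hSapp]
          exact h1
        · rcases eq_or_ne i 2 with rfl | hne
          · rw [if_pos rfl]
            apply Submodule.smul_mem
            rw [show (2 : ℤ) - 4 = -2 by ring]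
            exact hfq
          · rw [if_neg hne]
            exact Submodule.zero_mem _
      · rw [Finset.sum_sub_distrib, ← map_sum, hsum', hSv]
        have hite : ∑ i ∈ s, (if i = 2 then (-2 : ℂ) • f₁ else 0) = (-2 : ℂ) • f₁ := by
          rw [Finset.sum_ite_eq' s 2 (fun _ => (-2 : ℂ) • f₁)]
          rw [if_pos (by rw [hs]; exact Finset.mem_insert_self 2 _)]
        rw [hite, sub_self]
    have h2s : (2 : ℤ) ∈ s := by rw [hs]; exact Finset.mem_insert_self 2 _
    have hfin := hkey 2 h2s
    rw [if_pos rfl, sub_eq_zero] at hfin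
    exact hfin
  -- project to the q₁-degree-2 component
  obtain ⟨m₁, hm₁, hsum₁⟩ := gSp_decompose hgood₁.decomp e
  have hS2 : S (m₁ 2) = (-2 : ℂ) • f₁ :=
    extract q₁ e m₁ hm₁ hgood₁.f_mem hsum₁ hSe
  have hm₁2 : m₁ 2 ∈ gSp q₁ 2 := hm₁ 2
  -- project to the q₂-degree-2 component
  obtain ⟨m₂, hm₂, hsum₂⟩ := gSp_decompose hq₂diag (m₁ 2)
  have hq₂q₁ : ⁅q₂, q₁⁆ = 0 := by
    rw [← neg_eq_zero, lie_skew]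
    exact hq₁q₂
  have hm₂g1 : ∀ j, m₂ j ∈ gSp q₁ 2 := by
    intro j
    by_cases hjs : j ∈ m₂.support
    · have hkey : ∀ i ∈ m₂.support, (⁅q₁, m₂ i⁆ - ((2 : ℤ) : ℂ) • m₂ i) = 0 := by
        apply gSp_sum_eq_zero (q := q₂) m₂.support (fun j => j) (fun i _ j _ h => h)
        · intro i hi
          apply Submodule.sub_mem
          · exact gSp_stable hq₂q₁ (hm₂ i)
          · exact Submodule.smul_mem _ _ (hm₂ i)
        · rw [Finset.sum_sub_distrib]
          have h1 : ∑ i ∈ m₂.support, ⁅q₁, m₂ i⁆ = ⁅q₁, m₁ 2⁆ := by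
            rw [← hsum₂]
            have h2s := map_sum (ad ℂ L q₁) (fun i => m₂ i) m₂.support
            simp only [ad_apply] at h2s
            exact h2s.symm
          rw [h1, ← Finset.smul_sum, hsum₂, mem_gSp.mp hm₁2, sub_self]
      have h2 := hkey j hjs
      rw [sub_eq_zero] at h2
      exact mem_gSp.mpr h2
    · rw [Finsupp.notMem_support_iff.mp hjs]
      exact Submodule.zero_mem _
  have hS22 : S (m₂ 2) = (-2 : ℂ) • f₁ :=
    extract q₂ (m₁ 2) m₂ hm₂ hf2 hsum₂ hS2
  set e₁ : L := m₂ 2 with he₁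
  have he₁q₁ : e₁ ∈ gSp q₁ 2 := hm₂g1 2
  have he₁q₂ : e₁ ∈ gSp q₂ 2 := hm₂ 2
  set h₁ : L := ⁅e₁, f₁⁆ with hh₁
  have hh₁q₁ : h₁ ∈ gSp q₁ 0 := by
    have := lie_mem_gSp he₁q₁ hgood₁.f_mem
    rwa [show (2 : ℤ) + (-2) = 0 by ring] at this
  have hh₁q₂ : h₁ ∈ gSp q₂ 0 := by
    have := lie_mem_gSp he₁q₂ hf2
    rwa [show (2 : ℤ) + (-2) = 0 by ring] at this
  have hfe : ⁅f₁, ⁅f₁, e₁⁆⁆ = (-2 : ℂ) • f₁ := by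
    rw [← hSapp]
    exact hS22
  have hhf : ⁅h₁, f₁⁆ = (-2 : ℂ) • f₁ := by
    rw [hh₁]
    have h1 : ⁅e₁, f₁⁆ = -⁅f₁, e₁⁆ := by rw [← lie_skew f₁ e₁, neg_neg]
    have h2 : ⁅⁅f₁, e₁⁆, f₁⁆ = -⁅f₁, ⁅f₁, e₁⁆⁆ := by
      rw [← lie_skew f₁ ⁅f₁, e₁⁆, neg_neg]
    rw [h1, neg_lie, h2, neg_neg, hfe]
  have hue : ⁅h₁, e₁⁆ - (2 : ℂ) • e₁ = 0 := by
    apply hgood₁.inj 2 (by norm_num)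
    · apply Submodule.sub_mem
      · have := lie_mem_gSp hh₁q₁ he₁q₁
        rwa [show (0 : ℤ) + 2 = 2 by ring] at this
      · exact Submodule.smul_mem _ _ he₁q₁
    · have hulie : ⁅(⁅h₁, e₁⁆ - (2 : ℂ) • e₁), f₁⁆ = 0 := by
        rw [sub_lie, smul_lie, lie_lie, hhf, lie_smul, ← hh₁, lie_self]
        module
      rw [← lie_skew, hulie, neg_zero]
  refine ⟨e₁, h₁, sub_eq_zero.mp hue, hhf, hh₁.symm, he₁q₁, he₁q₂, hh₁q₁, hh₁q₂⟩

end
end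

section
/- Assume the reduction-by-stages setting and fix an sl₂-triple (e₁,h₁,f₁) with e₁ ∈ 𝔤₂(q₁) ∩ 𝔤₂(q₂) and h₁ ∈ 𝔤₀(q₁) ∩ 𝔤₀(q₂). Then ⁅f₀, e₁⁆ = 0; equivalently f₂ = f₁ + f₀ lies in f₁ + ker(ad e₁), so that χ₂ := B(f₂,·) belongs to the Slodowy slice S₁ := {ξ ∈ 𝔤* : (ξ − χ₁)(⁅e₁,x⁆) = 0 for all x ∈ 𝔤}. -/
open LieAlgebra Module

noncomputable section

variable {L : Type*} [LieRing L] [LieAlgebra ℂ L]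

/-- `⁅f₀, e₁⁆ = 0`, so `f₂ ∈ f₁ + ker (ad e₁)` and `χ₂ = B(f₂,·)` lies in the Slodowy
slice `S₁`. -/
theorem f₀_commutes_with_e₁
    [FiniteDimensional ℂ L] [LieAlgebra.IsSimple ℂ L]
    (B : LinearMap.BilinForm ℂ L)
    (hBsymm : ∀ x y : L, B x y = B y x)
    (hBnondeg : ∀ x : L, (∀ y : L, B x y = 0) → x = 0)
    (hBinv : ∀ x y z : L, B ⁅x, y⁆ z = B x ⁅y, z⁆)
    (f₁ f₂ q₁ q₂ : L)
    (hnil₁ : IsNilpotent (ad ℂ L f₁)) (hnil₂ : IsNilpotent (ad ℂ L f₂))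
    (hgood₁ : IsGoodGrading q₁ f₁) (hgood₂ : IsGoodGrading q₂ f₂)
    (m₁ m₂ m₀ : Submodule ℂ L)
    (hma₁ : IsGoodAlgebra B q₁ f₁ m₁) (hma₂ : IsGoodAlgebra B q₂ f₂ m₂)
    (hq₁q₂ : ⁅q₁, q₂⁆ = 0)
    (hsum : m₁ ⊔ m₀ = m₂) (hdisj : m₁ ⊓ m₀ = ⊥)
    (hm₀alg : ∀ x ∈ m₀, ∀ y ∈ m₀, ⁅x, y⁆ ∈ m₀)
    (hm₀q₁ : ∀ x ∈ m₀, ⁅q₁, x⁆ ∈ m₀) (hm₀q₂ : ∀ x ∈ m₀, ⁅q₂, x⁆ ∈ m₀)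
    (hideal : ∀ x ∈ m₂, ∀ y ∈ m₁, ⁅x, y⁆ ∈ m₁)
    (hf₀ : f₂ - f₁ ∈ gSp q₁ 0) (hm₀0 : m₀ ≤ gSp q₁ 0)
    (hq₀f₁ : ⁅q₂ - q₁, f₁⁆ = 0)
    (e₁ h₁ : L)
    (t1 : ⁅h₁, e₁⁆ = (2 : ℂ) • e₁) (t2 : ⁅h₁, f₁⁆ = (-2 : ℂ) • f₁) (t3 : ⁅e₁, f₁⁆ = h₁)
    (he₁ : e₁ ∈ gSp q₁ 2 ⊓ gSp q₂ 2) (hh₁ : h₁ ∈ gSp q₁ 0 ⊓ gSp q₂ 0) :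
    ⁅f₂ - f₁, e₁⁆ = 0 ∧
    (∀ x : L, (B f₂ - B f₁) ⁅e₁, x⁆ = 0) := by
  classical
  -- Extract the good-algebra structure
  obtain ⟨l₁, hl₁, -, -, hm₁⟩ := hma₁
  obtain ⟨l₂, hl₂, -, -, hm₂⟩ := hma₂
  -- Basic eigenvector facts
  have hf₀q₁ : ⁅q₁, f₂ - f₁⁆ = 0 := by
    have h := mem_gSp.mp hf₀
    simpa using h
  have he₁q₁ : ⁅q₁, e₁⁆ = (2 : ℂ) • e₁ := by
    have h := mem_gSp.mp he₁.1
    simpa using h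
  have he₁q₂ : ⁅q₂, e₁⁆ = (2 : ℂ) • e₁ := by
    have h := mem_gSp.mp he₁.2
    simpa using h
  have hf₂q₂ : ⁅q₂, f₂⁆ = (-2 : ℂ) • f₂ := by
    have h := mem_gSp.mp hgood₂.f_mem
    simpa using h
  have hf₁q₁ : ⁅q₁, f₁⁆ = (-2 : ℂ) • f₁ := by
    have h := mem_gSp.mp hgood₁.f_mem
    simpa using h
  have hf₁q₂ : ⁅q₂, f₁⁆ = (-2 : ℂ) • f₁ := by
    have h : ⁅q₂, f₁⁆ - ⁅q₁, f₁⁆ = 0 := by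
      rw [← sub_lie]; exact hq₀f₁
    have h' : ⁅q₂, f₁⁆ = ⁅q₁, f₁⁆ := by linear_combination (norm := module) h
    rw [h', hf₁q₁]
  have hf₀q₂ : ⁅q₂, f₂ - f₁⁆ = (-2 : ℂ) • (f₂ - f₁) := by
    rw [lie_sub, hf₂q₂, hf₁q₂, smul_sub]
  set v := ⁅f₂ - f₁, e₁⁆ with hv_def
  -- v is an eigenvector of ad q₁ with eigenvalue 2
  have hv₁ : ⁅q₁, v⁆ = (2 : ℂ) • v := by
    rw [hv_def, leibniz_lie, hf₀q₁, zero_lie, zero_add, he₁q₁, lie_smul]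
  -- v is killed by ad q₂
  have hv₂ : ⁅q₂, v⁆ = 0 := by
    rw [hv_def, leibniz_lie, hf₀q₂, he₁q₂, smul_lie, lie_smul]
    module
  -- v ∈ 𝔤₂(q₁) ⊆ m₁ ⊆ m₂
  have hvg : v ∈ gSp q₁ 2 := by
    rw [mem_gSp]
    simpa using hv₁
  have hvm₁ : v ∈ m₁ := by
    rw [hm₁]
    have h1 : gSp q₁ 2 ≤ ⨆ j : ℤ, ⨆ _ : 2 ≤ j, gSp q₁ j :=
      le_iSup_of_le 2 (le_iSup_of_le le_rfl le_rfl)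
    exact Submodule.mem_sup_right (h1 hvg)
  have hvm₂ : v ∈ m₂ := by
    rw [← hsum]
    exact Submodule.mem_sup_left hvm₁
  -- m₂ is contained in the sup of nonzero eigenspaces of ad q₂
  set A := LieAlgebra.ad ℂ L q₂ with hA
  have hgsp_eig : ∀ j : ℤ, gSp q₂ j ≤ Module.End.eigenspace A (j : ℂ) := by
    intro j x hx
    rw [Module.End.mem_eigenspace_iff, hA, LieAlgebra.ad_apply]
    exact hx
  have hT : m₂ ≤ ⨆ (μ : ℂ) (_ : μ ≠ 0), Module.End.eigenspace A μ := by
    rw [hm₂]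
    apply sup_le
    · refine le_trans hl₂ (le_trans (hgsp_eig 1) ?_)
      exact le_iSup_of_le ((1 : ℤ) : ℂ)
        (le_iSup_of_le (Int.cast_ne_zero.mpr one_ne_zero) le_rfl)
    · refine iSup_le fun j => iSup_le fun hj => le_trans (hgsp_eig j) ?_
      exact le_iSup_of_le ((j : ℤ) : ℂ)
        (le_iSup_of_le (Int.cast_ne_zero.mpr (by omega : (j : ℤ) ≠ 0)) le_rfl)
  -- v is in the 0-eigenspace of ad q₂
  have hv0 : v ∈ Module.End.eigenspace A 0 := by
    rw [Module.End.mem_eigenspace_iff, hA, LieAlgebra.ad_apply, hv₂, zero_smul]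
  -- eigenspace independence forces v = 0
  have hindep := (Module.End.eigenspaces_iSupIndep A) (0 : ℂ)
  have hvzero : v = 0 := by
    have hmem : v ∈ Module.End.eigenspace A 0 ⊓
        ⨆ (μ : ℂ) (_ : μ ≠ 0), Module.End.eigenspace A μ :=
      ⟨hv0, hT hvm₂⟩
    have := hindep.le_bot hmem
    simpa using this
  refine ⟨hvzero, fun x => ?_⟩
  have hinv := hBinv (f₂ - f₁) e₁ x
  rw [hv_def] at hvzero
  rw [hvzero] at hinv
  simp only [map_zero, LinearMap.zero_apply] at hinv
  have : B (f₂ - f₁) ⁅e₁, x⁆ = 0 := hinv.symm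
  rw [map_sub] at this
  simpa using this
end
end

section
/- Let (e,h,f) be an sl₂-triple in 𝔤 and let 𝔪₀ ⊆ ker(ad f) be a linear subspace. Then the linear map {ξ ∈ 𝔤* : ξ(⁅e,x⁆) = 0 for all x ∈ 𝔤} → 𝔪₀* sending ξ to its restriction ξ|_{𝔪₀} is surjective. -/
open LieAlgebra Module

noncomputable section

variable {L : Type*} [LieRing L] [LieAlgebra ℂ L]

namespace Sl2DisjointAux

section EndAux

variable {V : Type*} [AddCommGroup V] [Module ℂ V]

variable {V : Type*} [AddCommGroup V] [Module ℂ V]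

/-- shift identity -/
lemma shift1 {E H : Module.End ℂ V} (hHE : H * E = E * H + (2:ℂ) • E) (c : ℂ) :
    (H - (c+2) • 1) * E = E * (H - c • 1) := by
  rw [sub_mul, mul_sub, smul_mul_assoc, one_mul, mul_smul_comm, mul_one, hHE]
  module

lemma shiftm {E H : Module.End ℂ V} (hHE : H * E = E * H + (2:ℂ) • E) (m : ℕ) (c : ℂ) :
    (H - (c + 2*m) • 1) * E ^ m = E ^ m * (H - c • 1) := by
  induction m generalizing c with
  | zero => simp
  | succ m ih =>
    have h1 : (c + 2*((m+1:ℕ)) : ℂ) = (c + 2*m) + 2 := by push_cast; ring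
    rw [h1, pow_succ']
    calc (H - ((c + 2*m) + 2) • 1) * (E * E ^ m)
        = ((H - ((c + 2*m) + 2) • 1) * E) * E ^ m := by rw [mul_assoc]
      _ = (E * (H - (c + 2*m) • 1)) * E ^ m := by rw [shift1 hHE]
      _ = E * ((H - (c + 2*m) • 1) * E ^ m) := by rw [mul_assoc]
      _ = E * (E ^ m * (H - c • 1)) := by rw [ih]
      _ = (E * E ^ m) * (H - c • 1) := by rw [mul_assoc]

lemma shiftpow {E H : Module.End ℂ V} (hHE : H * E = E * H + (2:ℂ) • E) (m n : ℕ) (c : ℂ) :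
    (H - (c + 2*m) • 1) ^ n * E ^ m = E ^ m * (H - c • 1) ^ n := by
  induction n with
  | zero => simp
  | succ n ih =>
    calc (H - (c + 2*m) • 1) ^ (n+1) * E ^ m
        = (H - (c + 2*m) • 1) ^ n * ((H - (c + 2*m) • 1) * E ^ m) := by
          rw [pow_succ, mul_assoc]
      _ = (H - (c + 2*m) • 1) ^ n * (E ^ m * (H - c • 1)) := by rw [shiftm hHE]
      _ = ((H - (c + 2*m) • 1) ^ n * E ^ m) * (H - c • 1) := by rw [mul_assoc]
      _ = E ^ m * ((H - c • 1) ^ n * (H - c • 1)) := by rw [ih, mul_assoc]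
      _ = E ^ m * (H - c • 1) ^ (n+1) := by rw [← pow_succ]

lemma mapsG {E H : Module.End ℂ V} (hHE : H * E = E * H + (2:ℂ) • E) (m : ℕ) (c : ℂ)
    {x : V} (hx : x ∈ H.maxGenEigenspace c) :
    (E ^ m) x ∈ H.maxGenEigenspace (c + 2*m) := by
  rw [Module.End.mem_maxGenEigenspace] at hx ⊢
  obtain ⟨k, hk⟩ := hx
  refine ⟨k, ?_⟩
  have := congr_fun (congr_arg DFunLike.coe (shiftpow hHE m k c)) x
  simp only [Module.End.mul_apply] at this
  rw [this, hk, map_zero]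

lemma Gsup [FiniteDimensional ℂ V] (H : Module.End ℂ V) (c : ℂ) :
    (⨆ n : ℕ, LinearMap.ker ((H - c • 1) ^ n)) = H.maxGenEigenspace c := by
  ext x
  have hmono : Monotone fun n : ℕ => LinearMap.ker ((H - c • 1) ^ n) :=
    fun a b hab => (H - c • 1).iterateKer.monotone hab
  rw [Submodule.mem_iSup_of_directed _ hmono.directed_le, Module.End.mem_maxGenEigenspace]
  simp [LinearMap.mem_ker]

/-- component lemma via Fitting decomposition -/
lemma component [FiniteDimensional ℂ V] {E H : Module.End ℂ V}
    (hHE : H * E = E * H + (2:ℂ) • E) (ν : ℂ) (m : ℕ) {x : V}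
    (hx : x ∈ H.maxGenEigenspace ν) (hx' : x ∈ LinearMap.range (E ^ m)) :
    ∃ u ∈ H.maxGenEigenspace (ν - 2*m), x = (E ^ m) u := by
  set c : ℂ := ν - 2*m with hc
  have hcm : c + 2*m = ν := by rw [hc]; ring
  set A : Module.End ℂ V := H - c • 1 with hA
  set A' : Module.End ℂ V := H - ν • 1 with hA'
  have hFit := LinearMap.isCompl_iSup_ker_pow_iInf_range_pow A
  have hFit' := LinearMap.isCompl_iSup_ker_pow_iInf_range_pow A'
  obtain ⟨w, hw⟩ := hx'
  have hwmem : w ∈ (⨆ n : ℕ, LinearMap.ker (A ^ n)) ⊔ (⨅ n : ℕ, LinearMap.range (A ^ n)) := by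
    rw [hFit.sup_eq_top]; trivial
  obtain ⟨w₁, hw₁, w₂, hw₂, hw12⟩ := Submodule.mem_sup.mp hwmem
  have hw₁G : w₁ ∈ H.maxGenEigenspace c := by rwa [← Gsup]
  have hEw₁ : (E ^ m) w₁ ∈ H.maxGenEigenspace ν := by
    have := mapsG hHE m c hw₁G
    rwa [hcm] at this
  have hEw₂G : (E ^ m) w₂ ∈ H.maxGenEigenspace ν := by
    have h2 : (E ^ m) w₂ = x - (E ^ m) w₁ := by
      rw [← hw, ← hw12, map_add]; abel
    rw [h2]
    exact Submodule.sub_mem _ hx hEw₁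
  have hEw₂C : (E ^ m) w₂ ∈ (⨅ n : ℕ, LinearMap.range (A' ^ n)) := by
    rw [Submodule.mem_iInf]
    intro n
    have hw₂n : w₂ ∈ LinearMap.range (A ^ n) := (Submodule.mem_iInf _).mp hw₂ n
    obtain ⟨y, hy⟩ := hw₂n
    refine ⟨(E ^ m) y, ?_⟩
    have hcomm := congr_fun (congr_arg DFunLike.coe (shiftpow hHE m n c)) y
    simp only [Module.End.mul_apply] at hcomm
    rw [hcm] at hcomm
    rw [← hy, hA', hA]
    exact hcomm
  have hzero : (E ^ m) w₂ = 0 := by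
    have hd := hFit'.disjoint
    rw [Gsup] at hd
    exact (Submodule.disjoint_def.mp hd) _ hEw₂G hEw₂C
  refine ⟨w₁, hw₁G, ?_⟩
  rw [← hw, ← hw12, map_add, hzero, add_zero]

/-- the key commutator identity -/
lemma commId {E F H : Module.End ℂ V} (hHE : H * E = E * H + (2:ℂ) • E)
    (hEF : E * F = F * E + H) : ∀ k : ℕ,
    F * E ^ (k+1) = E ^ (k+1) * F
      - E ^ k * (((k:ℂ)+1) • H + (((k:ℂ)+1)*(k:ℂ)) • 1) := by
  have hFE : F * E = E * F - H := by rw [hEF]; abel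
  have hDmul : ∀ a b : ℂ, (a • H + b • 1) * E = E * (a • H + (b + 2*a) • 1) := by
    intro a b
    rw [add_mul, smul_mul_assoc, smul_mul_assoc, one_mul, hHE,
      mul_add, mul_smul_comm, mul_smul_comm, mul_one]
    module
  intro k
  induction k with
  | zero =>
    simp only [Nat.cast_zero, zero_add, pow_one, pow_zero, one_mul, mul_zero, zero_smul, add_zero,
      one_smul, mul_one]
    rw [hFE]
  | succ k ih =>
    have hps : E ^ (k+2) = E ^ (k+1) * E := by rw [pow_succ]
    calc F * E ^ (k+2) = (F * E ^ (k+1)) * E := by rw [hps, ← mul_assoc]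
      _ = (E ^ (k+1) * F) * E
          - (E ^ k * (((k:ℂ)+1) • H + (((k:ℂ)+1)*(k:ℂ)) • 1)) * E := by rw [ih, sub_mul]
      _ = E ^ (k+1) * (F * E)
          - E ^ k * ((((k:ℂ)+1) • H + (((k:ℂ)+1)*(k:ℂ)) • 1) * E) := by
            rw [mul_assoc, mul_assoc]
      _ = E ^ (k+1) * (E * F - H)
          - E ^ k * (E * (((k:ℂ)+1) • H + ((((k:ℂ)+1)*(k:ℂ)) + 2*((k:ℂ)+1)) • 1)) := by
            rw [hFE, hDmul]
      _ = E ^ (k+2) * F - E ^ (k+1) * H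
          - E ^ (k+1) * (((k:ℂ)+1) • H + ((((k:ℂ)+1)*(k:ℂ)) + 2*((k:ℂ)+1)) • 1) := by
            rw [mul_sub, ← mul_assoc, ← mul_assoc, ← pow_succ, ← pow_succ]
      _ = E ^ (k+2) * F
          - E ^ (k+1) * ((((k:ℕ)+1:ℕ):ℂ)+1) • H
          + (-1 : ℂ) • (E ^ (k+1) * (((((k:ℕ)+1:ℕ):ℂ)+1)*(((k:ℕ)+1:ℕ):ℂ)) • 1) := by
            push_cast
            rw [mul_add, mul_smul_comm, mul_smul_comm, mul_smul_comm, mul_smul_comm]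
            module
      _ = E ^ (k+2) * F
          - E ^ (k+1) * (((((k:ℕ)+1:ℕ):ℂ)+1) • H + (((((k:ℕ)+1:ℕ):ℂ)+1)*(((k:ℕ)+1:ℕ):ℂ)) • 1) := by
            rw [mul_add, mul_smul_comm, mul_smul_comm]
            module

lemma step [FiniteDimensional ℂ V] {E F H : Module.End ℂ V}
    (hHE : H * E = E * H + (2:ℂ) • E) (hEF : E * F = F * E + H)
    (commId : ∀ k : ℕ, F * E ^ (k+1) = E ^ (k+1) * F
      - E ^ k * (((k:ℂ)+1) • H + (((k:ℂ)+1)*(k:ℂ)) • 1))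
    (shiftm : ∀ (m : ℕ) (c : ℂ), (H - (c + 2*m) • 1) * E ^ m = E ^ m * (H - c • 1))
    (n k : ℕ) (u v : V) (μ : ℂ) (hμ : μ = -(n:ℂ))
    (hu : u ∈ H.maxGenEigenspace (μ - 2*((k+1:ℕ):ℂ)))
    (hv : v = (E ^ (k+1)) u) (hFv : F v = 0) :
    v ∈ LinearMap.range (E ^ (k+2)) := by
  set c : ℂ := μ - 2*((k+1:ℕ):ℂ) with hcdef
  set d : ℂ := μ - (k:ℂ) - 2 with hddef
  have hd : d ≠ 0 := by
    have hdn : d = -(((n + k + 2 : ℕ) : ℂ)) := by rw [hddef, hμ]; push_cast; ring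
    rw [hdn]
    simp only [ne_eq, neg_eq_zero, Nat.cast_eq_zero]
    omega
  have hk1 : ((k:ℂ)+1) ≠ 0 := by
    have : ((k:ℂ)+1) = ((k+1:ℕ):ℂ) := by push_cast; ring
    rw [this]
    exact Nat.cast_ne_zero.mpr (Nat.succ_ne_zero k)
  set A : Module.End ℂ V := H - c • 1 with hAdef
  set D : Module.End ℂ V := ((k:ℂ)+1) • H + (((k:ℂ)+1)*(k:ℂ)) • 1 with hDdef
  set z : V := E (F u) - D u with hzdef
  -- z ∈ ker (E ^ k)
  have hzker : (E ^ k) z = 0 := by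
    have h1 := congr_fun (congr_arg DFunLike.coe (commId k)) u
    simp only [Module.End.mul_apply, LinearMap.sub_apply] at h1
    have h2 : F v = (E ^ (k+1)) (F u) - (E ^ k) (D u) := by
      rw [← hDdef] at h1
      rw [hv]
      exact h1
    have h3 : (E ^ (k+1)) (F u) = (E ^ k) (E (F u)) := by
      rw [pow_succ]
      simp [Module.End.mul_apply]
    rw [hzdef, map_sub, ← h3, ← h2, hFv]
  set S : Submodule ℂ V := LinearMap.range E ⊔ LinearMap.ker (E ^ k) with hSdef
  have hSE : ∀ y : V, E y ∈ S := fun y => Submodule.mem_sup_left ⟨y, rfl⟩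
  have hSK : ∀ y : V, (E ^ k) y = 0 → y ∈ S := fun y hy =>
    Submodule.mem_sup_right (LinearMap.mem_ker.mpr hy)
  -- A preserves S
  have hSA : ∀ x ∈ S, A x ∈ S := by
    intro x hx
    rw [hSdef] at hx
    obtain ⟨a, ha, b, hb, rfl⟩ := Submodule.mem_sup.mp hx
    obtain ⟨y, rfl⟩ := ha
    rw [map_add]
    apply Submodule.add_mem
    · have h1 := congr_fun (congr_arg DFunLike.coe (shift1 hHE (c - 2))) y
      simp only [Module.End.mul_apply] at h1
      have h2 : (c - 2) + 2 = c := by ring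
      rw [h2] at h1
      rw [hAdef]
      rw [h1]
      exact hSE _
    · apply hSK
      have h1 := congr_fun (congr_arg DFunLike.coe (shiftm k c)) b
      simp only [Module.End.mul_apply] at h1
      have h2 : (E ^ k) (A b) = (H - (c + 2*(k:ℕ)) • 1) ((E ^ k) b) := by
        rw [hAdef, ← h1]
      rw [h2, LinearMap.mem_ker.mp hb, map_zero]
  -- A u + d • u ∈ S
  have hEFz : E (F u) - z = ((k:ℂ)+1) • (H u) + (((k:ℂ)+1)*(k:ℂ)) • u := by
    rw [hzdef, sub_sub_cancel, hDdef]
    simp [LinearMap.add_apply, LinearMap.smul_apply]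
  have hAu : A u + d • u = ((k:ℂ)+1)⁻¹ • (E (F u)) - ((k:ℂ)+1)⁻¹ • z := by
    have hAapp : A u = H u - c • u := by
      rw [hAdef]
      simp [LinearMap.sub_apply, LinearMap.smul_apply]
    have hcd : c = d - (k:ℂ) := by rw [hcdef, hddef]; push_cast; ring
    rw [hAapp, ← smul_sub, hEFz, hcd]
    match_scalars <;> field_simp <;> ring
  have hAuS : A u + d • u ∈ S := by
    rw [hAu]
    exact Submodule.sub_mem _ (Submodule.smul_mem _ _ (hSE _))
      (Submodule.smul_mem _ _ (hSK _ hzker))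
  -- the claim
  have claim : ∀ j : ℕ, (A ^ j) u - ((-d) ^ j) • u ∈ S := by
    intro j
    induction j with
    | zero => simp
    | succ j ih =>
      have e1 : (A ^ (j+1)) u - ((-d) ^ (j+1)) • u
          = A ((A ^ j) u - ((-d) ^ j) • u) + ((-d) ^ j) • (A u + d • u) := by
        have h1 : (A ^ (j+1)) u = A ((A ^ j) u) := by
          rw [pow_succ']; simp [Module.End.mul_apply]
        rw [h1, map_sub, map_smul]
        match_scalars <;> ring
      rw [e1]
      exact Submodule.add_mem _ (hSA _ ih) (Submodule.smul_mem _ _ hAuS)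
  -- u ∈ S
  have huS : u ∈ S := by
    obtain ⟨m, hm⟩ := Module.End.mem_maxGenEigenspace _ _ _ |>.mp hu
    have hm' : (A ^ m) u = 0 := hm
    have h1 := claim m
    rw [hm', zero_sub] at h1
    have h2 : u = (-((-d) ^ m))⁻¹ • (-(((-d) ^ m) • u)) := by
      rw [← neg_smul, smul_smul, inv_mul_cancel₀, one_smul]
      simp only [neg_ne_zero]
      exact pow_ne_zero _ (neg_ne_zero.mpr hd)
    rw [h2]
    exact Submodule.smul_mem _ _ h1
  obtain ⟨a, ha, b, hb, hab⟩ := Submodule.mem_sup.mp huS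
  obtain ⟨s, rfl⟩ := ha
  refine ⟨s, ?_⟩
  have hEb : (E ^ (k+1)) b = 0 := by
    rw [pow_succ']
    simp only [Module.End.mul_apply]
    rw [LinearMap.mem_ker.mp hb, map_zero]
  have hEs : (E ^ (k+1)) (E s) = (E ^ (k+2)) s := by
    have h2 : E ^ (k+2) = E ^ (k+1) * E := by rw [← pow_succ]
    rw [h2, Module.End.mul_apply]
  rw [hv, ← hab, map_add, hEb, add_zero, hEs]

end EndAux

attribute [local instance 100] LieRing.ofAssociativeRing

lemma lie_disjoint [FiniteDimensional ℂ L] (e h f : L)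
    (t1 : ⁅h, e⁆ = (2 : ℂ) • e) (t2 : ⁅h, f⁆ = (-2 : ℂ) • f) (t3 : ⁅e, f⁆ = h) :
    ∀ v : L, ⁅f, v⁆ = 0 → v ∈ LinearMap.range ((ad ℂ L) e) → v = 0 := by
  set E : Module.End ℂ L := (ad ℂ L) e with hEdef
  set F : Module.End ℂ L := (ad ℂ L) f with hFdef
  set H : Module.End ℂ L := (ad ℂ L) h with hHdef
  have hHE : H * E = E * H + (2:ℂ) • E := by
    have h1 : (ad ℂ L) ⁅h, e⁆ = ⁅H, E⁆ := LieHom.map_lie _ _ _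
    rw [t1, map_smul, Ring.lie_def] at h1
    rw [← sub_eq_iff_eq_add']
    exact h1.symm
  have hHF : F * H = H * F + (2:ℂ) • F := by
    have h1 : (ad ℂ L) ⁅h, f⁆ = ⁅H, F⁆ := LieHom.map_lie _ _ _
    rw [t2, map_smul, Ring.lie_def] at h1
    have h2 : (-2:ℂ) • F = H * F - F * H := h1
    linear_combination (norm := module) h2
  have hEF : E * F = F * E + H := by
    have h1 : (ad ℂ L) ⁅e, f⁆ = ⁅E, F⁆ := LieHom.map_lie _ _ _
    rw [t3, Ring.lie_def] at h1
    rw [← sub_eq_iff_eq_add']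
    exact h1.symm
  set W : Submodule ℂ L := LinearMap.ker F ⊓ LinearMap.range E with hWdef
  suffices hW : W = ⊥ by
    intro v h1 h2
    have hv : v ∈ W := ⟨LinearMap.mem_ker.mpr (by rw [hFdef]; rw [ad_apply]; exact h1), h2⟩
    rw [hW] at hv
    exact hv
  by_contra hWne
  haveI : Nontrivial ↥W := Submodule.nontrivial_iff_ne_bot.mpr hWne
  have hmaps : ∀ x ∈ W, H x ∈ W := by
    intro x hx
    obtain ⟨hx1, hx2⟩ := Submodule.mem_inf.mp hx
    refine Submodule.mem_inf.mpr ⟨?_, ?_⟩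
    · rw [LinearMap.mem_ker]
      have h1 : F (H x) = (F * H) x := rfl
      rw [h1, hHF]
      simp only [LinearMap.add_apply, Module.End.mul_apply, LinearMap.smul_apply]
      rw [LinearMap.mem_ker.mp hx1, map_zero, smul_zero, add_zero]
    · obtain ⟨y, rfl⟩ := hx2
      have h1 : H (E y) = (H * E) y := rfl
      rw [h1, hHE]
      exact ⟨H y + (2:ℂ) • y, by simp⟩
  set Hres : Module.End ℂ ↥W := H.restrict hmaps with hHres
  obtain ⟨μ, hμ⟩ := Module.End.exists_eigenvalue Hres
  obtain ⟨w, hw⟩ := hμ.exists_hasEigenvector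
  set v : L := (w : L) with hvdef
  have hv0 : v ≠ 0 := fun hc => hw.right (Submodule.coe_eq_zero.mp hc)
  have hHv : H v = μ • v := by
    have h1 : Hres w = μ • w := hw.apply_eq_smul
    have h2 : (↑(Hres w) : L) = H v := by rw [hHres]; exact LinearMap.restrict_coe_apply _ _ _
    rw [← h2, h1]
    rfl
  have hvker : F v = 0 := LinearMap.mem_ker.mp w.2.1
  have hvran : v ∈ LinearMap.range E := w.2.2
  have he0 : e ≠ 0 := by
    rintro rfl
    rw [show (ad ℂ L) (0:L) = 0 from map_zero _] at hEdef
    rw [hEdef, LinearMap.range_zero] at hvran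
    exact hv0 (by simpa using hvran)
  have hh0 : h ≠ 0 := by
    rintro rfl
    rw [zero_lie] at t1
    exact he0 (by simpa using t1.symm)
  have t : IsSl2Triple h e f := by
    refine ⟨hh0, t3, ?_, ?_⟩
    · rw [t1, ← Nat.cast_smul_eq_nsmul ℂ]
      norm_num
    · rw [t2, ← Nat.cast_smul_eq_nsmul ℂ]
      push_cast
      module
  have P : (t.symm).HasPrimitiveVectorWith v (-μ) := by
    refine ⟨hv0, ?_, ?_⟩
    · rw [neg_lie, show ⁅h, v⁆ = μ • v from hHv, neg_smul]
    · rw [show ⁅f, v⁆ = F v from rfl]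
      exact hvker
  obtain ⟨n, hn⟩ := P.exists_nat
  have hμn : μ = -(n:ℂ) := by rw [← hn]; ring
  have claim : ∀ k : ℕ, ∃ u ∈ H.maxGenEigenspace (μ - 2*((k+1:ℕ):ℂ)), v = (E ^ (k+1)) u := by
    intro k
    induction k with
    | zero =>
      have hvG : v ∈ H.maxGenEigenspace μ := by
        rw [Module.End.mem_maxGenEigenspace]
        exact ⟨1, by simp [hHv]⟩
      have hvr1 : v ∈ LinearMap.range (E ^ 1) := by rwa [pow_one]
      obtain ⟨u, hu1, hu2⟩ := component hHE μ 1 hvG hvr1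
      exact ⟨u, by simpa using hu1, by simpa using hu2⟩
    | succ k ih =>
      obtain ⟨u, hu1, hu2⟩ := ih
      have hvr : v ∈ LinearMap.range (E ^ (k+2)) :=
        step hHE hEF (commId hHE hEF) (shiftm hHE) n k u v μ hμn hu1 hu2 hvker
      have hvG : v ∈ H.maxGenEigenspace μ := by
        rw [Module.End.mem_maxGenEigenspace]
        exact ⟨1, by simp [hHv]⟩
      obtain ⟨u', hu'1, hu'2⟩ := component hHE μ (k+2) hvG hvr
      exact ⟨u', hu'1, hu'2⟩
  have heig : ∀ k : ℕ, H.HasEigenvalue (μ - 2*((k+1:ℕ):ℂ)) := by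
    intro k
    obtain ⟨u, huG, huv⟩ := claim k
    have hu0 : u ≠ 0 := by
      rintro rfl
      rw [map_zero] at huv
      exact hv0 huv
    set c : ℂ := μ - 2*((k+1:ℕ):ℂ) with hcdef
    set A : Module.End ℂ L := H - c • 1 with hAdef
    obtain ⟨m, hm⟩ := Module.End.mem_maxGenEigenspace _ _ _ |>.mp huG
    rw [← hAdef] at hm
    have hQ0 : ¬ ((A ^ 0) u = 0) := by simpa using hu0
    obtain ⟨j, hj1, hj2⟩ := Nat.exists_not_and_succ_of_not_zero_of_exists (p := fun j => (A ^ j) u = 0) hQ0 ⟨m, hm⟩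
    set x : L := (A ^ j) u with hxdef
    have hx : H x = c • x := by
      have h1 : A x = 0 := by
        have h2 : (A ^ (j+1)) u = A ((A ^ j) u) := by
          rw [pow_succ']; rfl
        rw [← hxdef] at h2
        rw [← h2, hj2]
      have h3 : A x = H x - c • x := by
        rw [hAdef]; simp
      rw [h3] at h1
      linear_combination (norm := module) h1
    exact Module.End.hasEigenvalue_of_hasEigenvector
      ⟨Module.End.mem_eigenspace_iff.mpr hx, hj1⟩
  have hinj : Function.Injective (fun k : ℕ => μ - 2*((k+1:ℕ):ℂ)) := by
    intro a b hab
    simp only [sub_right_inj, mul_eq_mul_left_iff] at hab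
    have : ((a+1:ℕ):ℂ) = ((b+1:ℕ):ℂ) := by
      rcases hab with h' | h'
      · exact h'
      · norm_num at h'
    exact_mod_cast Nat.succ_injective (Nat.cast_injective this)
  have hinf : (Set.range (fun k : ℕ => μ - 2*((k+1:ℕ):ℂ))).Infinite :=
    Set.infinite_range_of_injective hinj
  have hsub : Set.range (fun k : ℕ => μ - 2*((k+1:ℕ):ℂ)) ⊆ setOf H.HasEigenvalue := by
    rintro x ⟨k, rfl⟩
    exact heig k
  exact (hinf.mono hsub) H.finite_hasEigenvalue

end Sl2DisjointAux

/-- If `𝔪₀ ⊆ ker (ad f)` for an sl₂-triple `(e, h, f)`, then the restriction map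
`ker ad*(e) → 𝔪₀*` is surjective. -/
theorem restriction_from_ker_ad_e_surjective
    [FiniteDimensional ℂ L] [LieAlgebra.IsSimple ℂ L]
    (B : LinearMap.BilinForm ℂ L)
    (hBsymm : ∀ x y : L, B x y = B y x)
    (hBnondeg : ∀ x : L, (∀ y : L, B x y = 0) → x = 0)
    (hBinv : ∀ x y z : L, B ⁅x, y⁆ z = B x ⁅y, z⁆)
    (e h f : L)
    (t1 : ⁅h, e⁆ = (2 : ℂ) • e) (t2 : ⁅h, f⁆ = (-2 : ℂ) • f) (t3 : ⁅e, f⁆ = h)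
    (m₀ : Submodule ℂ L) (hm₀ : ∀ z ∈ m₀, ⁅f, z⁆ = 0) :
    Function.Surjective
      (fun ξ : {ξ : Module.Dual ℂ L // ∀ x : L, ξ ⁅e, x⁆ = 0} =>
        ((ξ : Module.Dual ℂ L).comp m₀.subtype : Module.Dual ℂ ↥m₀)) := by
  intro φ
  set Wp : Submodule ℂ L := LinearMap.range ((ad ℂ L) e) with hWp
  have hdisj : Disjoint m₀ Wp := by
    rw [Submodule.disjoint_def]
    intro x hx hxW
    exact Sl2DisjointAux.lie_disjoint e h f t1 t2 t3 x (hm₀ x hx) hxW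
  obtain ⟨r, hr⟩ := Submodule.exists_isCompl (m₀ ⊔ Wp)
  have hcompl : IsCompl m₀ (Wp ⊔ r) := by
    constructor
    · rw [Submodule.disjoint_def]
      intro x hx hxWr
      obtain ⟨a, ha, b, hb, rfl⟩ := Submodule.mem_sup.mp hxWr
      have hbmem : b ∈ (m₀ ⊔ Wp) ⊓ r := by
        refine ⟨?_, hb⟩
        have : b = (a + b) - a := by abel
        rw [this]
        exact Submodule.sub_mem _ (Submodule.mem_sup_left hx) (Submodule.mem_sup_right ha)
      have hb0 : b = 0 := by
        have := hr.disjoint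
        rw [Submodule.disjoint_def] at this
        exact this b hbmem.1 hbmem.2
      rw [hb0, add_zero] at hx ⊢
      exact Submodule.disjoint_def.mp hdisj a hx ha
    · rw [codisjoint_iff, ← sup_assoc]
      exact hr.codisjoint.eq_top
  set π : L →ₗ[ℂ] ↥m₀ := m₀.linearProjOfIsCompl _ hcompl with hπ
  refine ⟨⟨(φ.comp π : L →ₗ[ℂ] ℂ), ?_⟩, ?_⟩
  · intro x
    have hmem : ⁅e, x⁆ ∈ Wp ⊔ r := Submodule.mem_sup_left ⟨x, rfl⟩
    have hπ0 : π ⁅e, x⁆ = 0 := Submodule.projectionOnto_apply_of_mem_right hcompl hmem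
    simp only [LinearMap.comp_apply, hπ0, map_zero]
  · ext z
    simp only [LinearMap.comp_apply, Submodule.subtype_apply]
    have : π (z : L) = z := Submodule.linearProjOfIsCompl_apply_left hcompl z
    rw [this]
end
end
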